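/- arXiv:0806.3691 — 5 statements merged into one kernel-verified Lean document; each statement's English description precedes it below -/
import Mathlib

section
/- In the braid group B∞, the square roots of free generators satisfy the extended braid relations (EB): for all 1 ≤ k < l, γ_l γ_{l−1} (γ_{l−2} γ_{l−3} ⋯ γ_{k+1} γ_k) γ_l = γ_{l−1} (γ_{l−2} γ_{l−3} ⋯ γ_{k+1} γ_k) γ_l γ_{l−1}, where for k = l−1 the inner product γ_{l−2} ⋯ γ_k is empty. -/
/-- The Artin braid relations on the free group with generators `σ_i`, `i ∈ ℕ+`. -/
def braidRels : Set (FreeGroup ℕ+) :=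
  {r | ∃ i j : ℕ+,
    ((j : ℕ) = (i : ℕ) + 1 ∧
      r = FreeGroup.of i * FreeGroup.of j * FreeGroup.of i *
          (FreeGroup.of j * FreeGroup.of i * FreeGroup.of j)⁻¹) ∨
    ((i : ℕ) + 1 < (j : ℕ) ∧
      r = FreeGroup.of i * FreeGroup.of j * (FreeGroup.of j * FreeGroup.of i)⁻¹)}

/-- The braid group `B∞` on infinitely many strands, presented by the Artin generators
`σ_1, σ_2, …` subject to the braid relations. -/
abbrev BraidInf : Type := PresentedGroup braidRels

/-- The Artin generator `σ_n` of `B∞` for `n ≥ 1`, with the paper's convention `σ_0 = 1`. -/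
def sig (n : ℕ) : BraidInf :=
  if h : 0 < n then PresentedGroup.of (⟨n, h⟩ : ℕ+) else 1

/-- Ascending product `f a * f (a+1) * ⋯ * f b` (equal to `1` when `b < a`). -/
def ascProd {G : Type*} [Monoid G] (f : ℕ → G) (a b : ℕ) : G :=
  ((List.range' a (b + 1 - a)).map f).prod

/-- Descending product `f b * f (b-1) * ⋯ * f a` (equal to `1` when `b < a`). -/
def descProd {G : Type*} [Monoid G] (f : ℕ → G) (b a : ℕ) : G :=
  (((List.range' a (b + 1 - a)).map f).reverse).prod

/-- The square roots of free generators
`γ_k = (σ_1 ⋯ σ_{k−1}) σ_k (σ_{k−1}^{−1} ⋯ σ_1^{−1})` of `B∞`. -/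
def γ (k : ℕ) : BraidInf :=
  ascProd sig 1 (k - 1) * sig k * descProd (fun i => (sig i)⁻¹) (k - 1) 1

/-- The subgroup `B_n` of `B∞` generated by `σ_1, …, σ_{n−1}`. -/
def Bsub (n : ℕ) : Subgroup BraidInf :=
  Subgroup.closure {x | ∃ i : ℕ, 1 ≤ i ∧ i < n ∧ x = sig i}

/-- The subgroup `B_{m,∞}` of `B∞` generated by `{σ_k : k ≥ m}`. -/
def BFrom (m : ℕ) : Subgroup BraidInf :=
  Subgroup.closure {x | ∃ i : ℕ, m ≤ i ∧ x = sig i}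

theorem braid_rel1 {i j : ℕ+} (h : (j : ℕ) = (i : ℕ) + 1) :
    (PresentedGroup.of i : BraidInf) * .of j * .of i = .of j * .of i * .of j := by
  have h1 : (FreeGroup.of i * FreeGroup.of j * FreeGroup.of i *
      (FreeGroup.of j * FreeGroup.of i * FreeGroup.of j)⁻¹) ∈ braidRels :=
    ⟨i, j, Or.inl ⟨h, rfl⟩⟩
  have h2 : (PresentedGroup.mk braidRels) (FreeGroup.of i * FreeGroup.of j * FreeGroup.of i *
      (FreeGroup.of j * FreeGroup.of i * FreeGroup.of j)⁻¹) = 1 :=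
    (QuotientGroup.eq_one_iff _).mpr (Subgroup.subset_normalClosure h1)
  simp only [map_mul, map_inv] at h2
  exact mul_inv_eq_one.mp h2

theorem braid_rel2 {i j : ℕ+} (h : (i : ℕ) + 1 < (j : ℕ)) :
    (PresentedGroup.of i : BraidInf) * .of j = .of j * .of i := by
  have h1 : (FreeGroup.of i * FreeGroup.of j * (FreeGroup.of j * FreeGroup.of i)⁻¹) ∈ braidRels :=
    ⟨i, j, Or.inr ⟨h, rfl⟩⟩
  have h2 : (PresentedGroup.mk braidRels) (FreeGroup.of i * FreeGroup.of j *
      (FreeGroup.of j * FreeGroup.of i)⁻¹) = 1 :=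
    (QuotientGroup.eq_one_iff _).mpr (Subgroup.subset_normalClosure h1)
  simp only [map_mul, map_inv] at h2
  exact mul_inv_eq_one.mp h2

theorem shMap_rels : ∀ r ∈ braidRels,
    FreeGroup.lift (fun i : ℕ+ => (PresentedGroup.of (i + 1) : BraidInf)) r = 1 := by
  rintro r ⟨i, j, ⟨h, rfl⟩ | ⟨h, rfl⟩⟩
  · simp only [map_mul, map_inv, FreeGroup.lift_apply_of]
    rw [mul_inv_eq_one]
    exact braid_rel1 (by push_cast; omega)
  · simp only [map_mul, map_inv, FreeGroup.lift_apply_of]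
    rw [mul_inv_eq_one]
    exact braid_rel2 (by push_cast; omega)

/-- The shift endomorphism `sh` of `B∞`, determined by `sh(σ_i) = σ_{i+1}`. -/
def sh : BraidInf →* BraidInf := PresentedGroup.toGroup shMap_rels

/-- The `m`-shift `sh_m(τ) = σ_m σ_{m−1} ⋯ σ_1 ⬝ sh(τ) ⬝ σ_1^{−1} ⋯ σ_{m−1}^{−1} σ_m^{−1}`. -/
def shm (m : ℕ) (τ : BraidInf) : BraidInf :=
  descProd sig m 1 * sh τ * ascProd (fun i => (sig i)⁻¹) 1 m


section AuxProd
variable {G : Type*} [Group G]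

lemma ascProd_empty (f : ℕ → G) {a b : ℕ} (h : b < a) : ascProd f a b = 1 := by
  unfold ascProd
  have : b + 1 - a = 0 := by omega
  simp [this]

lemma ascProd_self (f : ℕ → G) (a : ℕ) : ascProd f a a = f a := by
  unfold ascProd
  have : a + 1 - a = 1 := by omega
  simp [this]

lemma ascProd_concat (f : ℕ → G) {a b : ℕ} (h : a ≤ b + 1) :
    ascProd f a (b + 1) = ascProd f a b * f (b + 1) := by
  unfold ascProd
  have h1 : b + 1 + 1 - a = (b + 1 - a) + 1 := by omega
  have h2 : a + 1 * (b + 1 - a) = b + 1 := by omega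
  rw [h1, List.range'_concat, h2, List.map_append, List.prod_append]
  simp

lemma ascProd_append (f : ℕ → G) {a b c : ℕ} (h1 : a ≤ b + 1) (h2 : b ≤ c) :
    ascProd f a c = ascProd f a b * ascProd f (b + 1) c := by
  induction c, h2 using Nat.le_induction with
  | base => rw [ascProd_empty f (by omega : b < b + 1), mul_one]
  | succ c hc ih =>
      rw [ascProd_concat f (by omega : a ≤ c + 1), ih,
        ascProd_concat f (by omega : b + 1 ≤ c + 1), mul_assoc]

lemma descProd_empty (f : ℕ → G) {a b : ℕ} (h : b < a) : descProd f b a = 1 := by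
  unfold descProd
  have : b + 1 - a = 0 := by omega
  simp [this]

lemma descProd_concat (f : ℕ → G) {a b : ℕ} (h : a ≤ b + 1) :
    descProd f (b + 1) a = f (b + 1) * descProd f b a := by
  unfold descProd
  have h1 : b + 1 + 1 - a = (b + 1 - a) + 1 := by omega
  have h2 : a + 1 * (b + 1 - a) = b + 1 := by omega
  rw [h1, List.range'_concat, h2, List.map_append, List.reverse_append, List.prod_append]
  simp

lemma descProd_inv (f : ℕ → G) (a b : ℕ) :
    descProd (fun i => (f i)⁻¹) b a = (ascProd f a b)⁻¹ := by
  unfold descProd ascProd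
  rw [List.prod_inv_reverse, List.map_map]
  rfl

lemma commute_ascProd {x : G} {f : ℕ → G} {a b : ℕ}
    (h : ∀ i, a ≤ i → i ≤ b → Commute x (f i)) : Commute x (ascProd f a b) := by
  apply Commute.list_prod_right
  intro y hy
  obtain ⟨i, hi, rfl⟩ := List.mem_map.mp hy
  rw [List.mem_range'_1] at hi
  exact h i hi.1 (by omega)

end AuxProd

section SigLemmas

lemma sig_braid {i : ℕ} (hi : 1 ≤ i) :
    sig i * sig (i + 1) * sig i = sig (i + 1) * sig i * sig (i + 1) := by
  unfold sig
  rw [dif_pos (by omega : 0 < i), dif_pos (by omega : 0 < i + 1)]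
  exact braid_rel1 rfl

lemma sig_comm {i j : ℕ} (h : i + 2 ≤ j) : Commute (sig i) (sig j) := by
  rcases Nat.eq_zero_or_pos i with hi | hi
  · subst hi
    unfold sig
    rw [dif_neg (by omega)]
    exact Commute.one_left _
  · unfold sig
    rw [dif_pos hi, dif_pos (by omega : 0 < j)]
    exact braid_rel2 (show i + 1 < j by omega)

lemma gamma_eq (k : ℕ) :
    γ k = ascProd sig 1 (k - 1) * sig k * (ascProd sig 1 (k - 1))⁻¹ := by
  unfold γ
  rw [descProd_inv]

lemma descProd_gamma {k : ℕ} (hk : 1 ≤ k) (m : ℕ) :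
    descProd γ m k = ascProd sig 1 (k - 1) * ascProd sig k m * (ascProd sig 1 (k - 1))⁻¹ := by
  induction m with
  | zero =>
      rw [descProd_empty γ (by omega : 0 < k), ascProd_empty sig (by omega : 0 < k)]
      group
  | succ m ih =>
      rcases le_or_gt k (m + 1) with hkm | hkm
      · rw [descProd_concat γ hkm, ih, gamma_eq (m + 1)]
        have h1 : m + 1 - 1 = m := by omega
        have h2 : ascProd sig 1 m
            = ascProd sig 1 (k - 1) * ascProd sig ((k - 1) + 1) m :=
          ascProd_append sig (by omega) (by omega)
        have h3 : (k - 1) + 1 = k := by omega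
        rw [h1, h2, h3, ascProd_concat sig hkm]
        group
      · rw [descProd_empty γ hkm, ascProd_empty sig hkm]
        group

lemma key_inner {G : Type*} [Group G] (A s t : G)
    (hb : s * t * s = t * s * t) (hc : t * A = A * t) :
    (A * s * t * s⁻¹ * A⁻¹) * (A * s * A⁻¹) * A * (A * s * t * s⁻¹ * A⁻¹)
      = (A * s * A⁻¹) * A * (A * s * t * s⁻¹ * A⁻¹) * (A * s * A⁻¹) := by
  calc (A * s * t * s⁻¹ * A⁻¹) * (A * s * A⁻¹) * A * (A * s * t * s⁻¹ * A⁻¹)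
      = A * s * (t * A) * (s * t * s⁻¹) * A⁻¹ := by group
    _ = A * s * (A * t) * (s * t * s⁻¹) * A⁻¹ := by rw [hc]
    _ = A * s * A * (t * s * t) * (s⁻¹ * A⁻¹) := by group
    _ = A * s * A * (s * t * s) * (s⁻¹ * A⁻¹) := by rw [hb]
    _ = (A * s * A⁻¹) * A * (A * s * t * s⁻¹ * A⁻¹) * (A * s * A⁻¹) := by group

lemma key {G : Type*} [Group G] (E A s t : G)
    (hb : s * t * s = t * s * t) (hc : t * A = A * t) :
    (E * (A * s * t * s⁻¹ * A⁻¹) * E⁻¹) * (E * (A * s * A⁻¹) * E⁻¹) * (E * A * E⁻¹)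
        * (E * (A * s * t * s⁻¹ * A⁻¹) * E⁻¹)
      = (E * (A * s * A⁻¹) * E⁻¹) * (E * A * E⁻¹) * (E * (A * s * t * s⁻¹ * A⁻¹) * E⁻¹)
        * (E * (A * s * A⁻¹) * E⁻¹) := by
  have h := key_inner A s t hb hc
  calc (E * (A * s * t * s⁻¹ * A⁻¹) * E⁻¹) * (E * (A * s * A⁻¹) * E⁻¹) * (E * A * E⁻¹)
        * (E * (A * s * t * s⁻¹ * A⁻¹) * E⁻¹)
      = E * ((A * s * t * s⁻¹ * A⁻¹) * (A * s * A⁻¹) * A * (A * s * t * s⁻¹ * A⁻¹)) * E⁻¹ := by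
        group
    _ = E * ((A * s * A⁻¹) * A * (A * s * t * s⁻¹ * A⁻¹) * (A * s * A⁻¹)) * E⁻¹ := by rw [h]
    _ = (E * (A * s * A⁻¹) * E⁻¹) * (E * A * E⁻¹) * (E * (A * s * t * s⁻¹ * A⁻¹) * E⁻¹)
        * (E * (A * s * A⁻¹) * E⁻¹) := by group

end SigLemmas

/-- In `B∞` the square roots of free generators satisfy the extended braid relations (EB):
for all `1 ≤ k < l`,
`γ_l γ_{l−1} (γ_{l−2} γ_{l−3} ⋯ γ_{k+1} γ_k) γ_l = γ_{l−1} (γ_{l−2} ⋯ γ_k) γ_l γ_{l−1}`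
(the inner product being empty for `k = l−1`). -/
theorem gamma_extended_braid_relations (k l : ℕ) (hk : 1 ≤ k) (hkl : k < l) :
    γ l * γ (l - 1) * descProd γ (l - 2) k * γ l
      = γ (l - 1) * descProd γ (l - 2) k * γ l * γ (l - 1) := by
  set E := ascProd sig 1 (k - 1) with hE
  set A := ascProd sig k (l - 2) with hA
  set s := sig (l - 1) with hs
  set t := sig l with ht
  have hl2 : 2 ≤ l := by omega
  have hEA : ascProd sig 1 (l - 2) = E * A := by
    have h3 : (k - 1) + 1 = k := by omega
    rw [hE, hA, ascProd_append sig (by omega : 1 ≤ (k-1)+1) (by omega : k - 1 ≤ l - 2), h3]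
  have hEAs : ascProd sig 1 (l - 1) = E * (A * s) := by
    have h1 : l - 1 = (l - 2) + 1 := by omega
    rw [h1, ascProd_concat sig (by omega : 1 ≤ (l-2)+1), hEA, mul_assoc, hs, ← h1]
  have hγl : γ l = E * (A * s * t * s⁻¹ * A⁻¹) * E⁻¹ := by
    rw [gamma_eq l, hEAs, ← ht]
    group
  have hγl1 : γ (l - 1) = E * (A * s * A⁻¹) * E⁻¹ := by
    rw [gamma_eq (l - 1)]
    have h1 : l - 1 - 1 = l - 2 := by omega
    rw [h1, hEA, ← hs]
    group
  have hD : descProd γ (l - 2) k = E * A * E⁻¹ := by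
    rw [descProd_gamma hk (l - 2), ← hE, ← hA]
  have hb : s * t * s = t * s * t := by
    have h1 : (l - 1) + 1 = l := by omega
    have := sig_braid (i := l - 1) (by omega)
    rwa [h1, ← hs, ← ht] at this
  have hc : t * A = A * t := by
    refine (commute_ascProd ?_).eq
    intro i hi1 hi2
    exact (sig_comm (by omega : i + 2 ≤ l)).symm
  rw [hγl, hγl1, hD]
  exact key E A s t hb hc
end

section
/- In the braid group B∞, the square roots of free generators satisfy the star-graph relations: γ_j γ_k γ_j = γ_k γ_j γ_k for all j, k ≥ 1, and γ_l γ_k γ_j γ_l = γ_k γ_j γ_l γ_k = γ_j γ_l γ_k γ_j for all 1 ≤ j < k < l. -/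
namespace SG

lemma shift_inv {x y A : BraidInf} (h : x * A = A * y) : y * A⁻¹ = A⁻¹ * x := by
  calc y * A⁻¹ = A⁻¹ * (A * y) * A⁻¹ := by group
    _ = A⁻¹ * (x * A) * A⁻¹ := by rw [← h]
    _ = A⁻¹ * x := by group

lemma sig_pos {i : ℕ} (h : 0 < i) : sig i = PresentedGroup.of (⟨i, h⟩ : ℕ+) := by
  unfold sig; exact dif_pos h

lemma braid_sig {i : ℕ} (h : 1 ≤ i) :
    sig i * sig (i+1) * sig i = sig (i+1) * sig i * sig (i+1) := by
  rw [sig_pos h, sig_pos (by omega : 0 < i+1)]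
  exact braid_rel1 rfl

lemma comm_sig {i j : ℕ} (hi : 1 ≤ i) (hij : i + 1 < j) :
    sig i * sig j = sig j * sig i := by
  rw [sig_pos hi, sig_pos (by omega : 0 < j)]
  exact braid_rel2 hij

def AA (a n : ℕ) : BraidInf := ((List.range' a n).map sig).prod

lemma AA_zero (a : ℕ) : AA a 0 = 1 := rfl

lemma AA_succ_right (a n : ℕ) : AA a (n+1) = AA a n * sig (a+n) := by
  unfold AA
  rw [List.range'_concat]
  simp

lemma AA_succ_left (a n : ℕ) : AA a (n+1) = sig a * AA (a+1) n := by
  unfold AA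
  rw [List.range'_succ]
  simp

lemma comm_AA_high {a i : ℕ} (ha : 1 ≤ a) :
    ∀ {n}, a + n < i → sig i * AA a n = AA a n * sig i := by
  intro n
  induction n with
  | zero => intro _; simp [AA_zero]
  | succ n ih =>
    intro hi
    rw [AA_succ_right]
    calc sig i * (AA a n * sig (a+n))
        = (sig i * AA a n) * sig (a+n) := by group
      _ = (AA a n * sig i) * sig (a+n) := by rw [ih (by omega)]
      _ = AA a n * (sig (a+n) * sig i) := by
          rw [mul_assoc, ← comm_sig (show 1 ≤ a+n by omega) (show a+n+1 < i by omega)]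
      _ = AA a n * sig (a+n) * sig i := by group

lemma comm_AA_low {a n i : ℕ} (hi : 1 ≤ i) (ha : i + 1 < a) :
    sig i * AA a n = AA a n * sig i := by
  induction n with
  | zero => simp [AA_zero]
  | succ n ih =>
    rw [AA_succ_right]
    calc sig i * (AA a n * sig (a+n))
        = (sig i * AA a n) * sig (a+n) := by group
      _ = (AA a n * sig i) * sig (a+n) := by rw [ih]
      _ = AA a n * (sig i * sig (a+n)) := by group
      _ = AA a n * (sig (a+n) * sig i) := by rw [comm_sig hi (by omega)]
      _ = AA a n * sig (a+n) * sig i := by group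

lemma Dshift {a j : ℕ} (ha : 1 ≤ a) (h1 : a ≤ j) :
    ∀ {n}, j + 1 < a + n → sig (j+1) * AA a n = AA a n * sig j := by
  intro n
  induction n with
  | zero => omega
  | succ n ih =>
    intro h2
    rcases Nat.lt_or_ge (j+1) (a+n) with h | h
    · rw [AA_succ_right]
      calc sig (j+1) * (AA a n * sig (a+n))
          = (sig (j+1) * AA a n) * sig (a+n) := by group
        _ = (AA a n * sig j) * sig (a+n) := by rw [ih h]
        _ = AA a n * (sig j * sig (a+n)) := by group
        _ = AA a n * (sig (a+n) * sig j) := by rw [comm_sig (by omega) (by omega)]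
        _ = AA a n * sig (a+n) * sig j := by group
    · have hj : j + 1 = a + n := by omega
      obtain ⟨m, rfl⟩ : ∃ m, n = m + 1 := ⟨n - 1, by omega⟩
      have hcomm : sig (j+1) * AA a m = AA a m * sig (j+1) :=
        comm_AA_high ha (by omega)
      rw [AA_succ_right, AA_succ_right]
      have e1 : a + m = j := by omega
      have e2 : a + (m+1) = j + 1 := by omega
      rw [e1, e2]
      calc sig (j+1) * (AA a m * sig j * sig (j+1))
          = (sig (j+1) * AA a m) * (sig j * sig (j+1)) := by group
        _ = (AA a m * sig (j+1)) * (sig j * sig (j+1)) := by rw [hcomm]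
        _ = AA a m * (sig (j+1) * sig j * sig (j+1)) := by group
        _ = AA a m * (sig j * sig (j+1) * sig j) := by rw [← braid_sig (by omega : 1 ≤ j)]
        _ = AA a m * sig j * sig (j+1) * sig j := by group

def g (r k : ℕ) : BraidInf := AA (r+1) (k-1) * sig (k+r) * (AA (r+1) (k-1))⁻¹

lemma g_one (r : ℕ) : g r 1 = sig (r+1) := by
  simp [g, AA_zero, Nat.add_comm]

lemma g_succ (r k : ℕ) (hk : 1 ≤ k) :
    g r (k+1) = sig (r+1) * g (r+1) k * (sig (r+1))⁻¹ := by
  obtain ⟨m, rfl⟩ : ∃ m, k = m + 1 := ⟨k - 1, by omega⟩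
  simp only [g, Nat.add_sub_cancel]
  have e2 : m+1+1+r = m+1+(r+1) := by omega
  rw [e2, AA_succ_left]
  group

lemma g_form : ∀ k r, 1 ≤ k →
    g r k = (AA (r+2) (k-1))⁻¹ * sig (r+1) * AA (r+2) (k-1) := by
  intro k
  induction k with
  | zero => omega
  | succ k ih =>
    intro r _
    rcases Nat.eq_zero_or_pos k with rfl | hk
    · simp [g_one, AA_zero]
    · obtain ⟨m, rfl⟩ : ∃ m, k = m + 1 := ⟨k - 1, by omega⟩
      rw [g_succ r (m+1) hk, ih (r+1) hk]
      simp only [Nat.add_sub_cancel]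
      rw [show r+1+2 = r+3 by omega, show r+1+1 = r+2 by omega]
      have hA : AA (r+2) (m+1) = sig (r+2) * AA (r+3) m := by
        rw [AA_succ_left, show r+2+1 = r+3 by omega]
      have hb := braid_sig (by omega : 1 ≤ r+1)
      rw [show r+1+1 = r+2 by omega] at hb
      have key : sig (r+1) * sig (r+2) * (sig (r+1))⁻¹
          = (sig (r+2))⁻¹ * sig (r+1) * sig (r+2) := by
        calc sig (r+1) * sig (r+2) * (sig (r+1))⁻¹
            = (sig (r+2))⁻¹ * (sig (r+2) * sig (r+1) * sig (r+2)) * (sig (r+1))⁻¹ := by group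
          _ = (sig (r+2))⁻¹ * (sig (r+1) * sig (r+2) * sig (r+1)) * (sig (r+1))⁻¹ := by
              rw [hb]
          _ = (sig (r+2))⁻¹ * sig (r+1) * sig (r+2) := by group
      have hc : sig (r+1) * AA (r+3) m = AA (r+3) m * sig (r+1) :=
        comm_AA_low (by omega) (by omega)
      have hc1 : sig (r+1) * (AA (r+3) m)⁻¹ = (AA (r+3) m)⁻¹ * sig (r+1) := shift_inv hc
      have hc2 : AA (r+3) m * (sig (r+1))⁻¹ = (sig (r+1))⁻¹ * AA (r+3) m :=
        shift_inv hc.symm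
      rw [hA]
      calc sig (r+1) * ((AA (r+3) m)⁻¹ * sig (r+2) * AA (r+3) m) * (sig (r+1))⁻¹
          = (sig (r+1) * (AA (r+3) m)⁻¹) * sig (r+2) * (AA (r+3) m * (sig (r+1))⁻¹) := by
            group
        _ = ((AA (r+3) m)⁻¹ * sig (r+1)) * sig (r+2) * ((sig (r+1))⁻¹ * AA (r+3) m) := by
            rw [hc1, hc2]
        _ = (AA (r+3) m)⁻¹ * (sig (r+1) * sig (r+2) * (sig (r+1))⁻¹) * AA (r+3) m := by
            group
        _ = (AA (r+3) m)⁻¹ * ((sig (r+2))⁻¹ * sig (r+1) * sig (r+2)) * AA (r+3) m := by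
            rw [key]
        _ = (sig (r+2) * AA (r+3) m)⁻¹ * sig (r+1) * (sig (r+2) * AA (r+3) m) := by
            group

lemma braid_sig_g (r k : ℕ) (hk : 1 ≤ k) :
    sig (r+1) * g (r+1) k * sig (r+1) = g (r+1) k * sig (r+1) * g (r+1) k := by
  rw [g_form k (r+1) hk, show r+1+2 = r+3 by omega, show r+1+1 = r+2 by omega]
  set Q := AA (r+3) (k-1) with hQ
  have hc : sig (r+1) * Q = Q * sig (r+1) := comm_AA_low (by omega) (by omega)
  have hc1 : sig (r+1) * Q⁻¹ = Q⁻¹ * sig (r+1) := shift_inv hc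
  have hb := braid_sig (by omega : 1 ≤ r+1)
  rw [show r+1+1 = r+2 by omega] at hb
  calc sig (r+1) * (Q⁻¹ * sig (r+2) * Q) * sig (r+1)
      = (sig (r+1) * Q⁻¹) * sig (r+2) * (Q * sig (r+1)) := by group
    _ = (Q⁻¹ * sig (r+1)) * sig (r+2) * (sig (r+1) * Q) := by rw [hc1, ← hc]
    _ = Q⁻¹ * (sig (r+1) * sig (r+2) * sig (r+1)) * Q := by group
    _ = Q⁻¹ * (sig (r+2) * sig (r+1) * sig (r+2)) * Q := by rw [hb]
    _ = Q⁻¹ * sig (r+2) * (sig (r+1) * Q) * (Q⁻¹ * sig (r+2) * Q) := by group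
    _ = Q⁻¹ * sig (r+2) * (Q * sig (r+1)) * (Q⁻¹ * sig (r+2) * Q) := by rw [hc]
    _ = Q⁻¹ * sig (r+2) * Q * sig (r+1) * (Q⁻¹ * sig (r+2) * Q) := by group

lemma braid_g : ∀ j r k, 1 ≤ j → j < k →
    g r j * g r k * g r j = g r k * g r j * g r k := by
  intro j
  induction j with
  | zero => omega
  | succ j ih =>
    intro r k hj hjk
    obtain ⟨m, rfl⟩ : ∃ m, k = m + 1 := ⟨k - 1, by omega⟩
    have hm : 1 ≤ m := by omega
    rcases Nat.eq_zero_or_pos j with rfl | hj1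
    · rw [g_one, g_succ r m hm]
      have hb := braid_sig_g r m hm
      set t := sig (r+1)
      set h := g (r+1) m
      calc t * (t * h * t⁻¹) * t = t * (t * h * t) * t⁻¹ := by group
        _ = t * (h * t * h) * t⁻¹ := by rw [hb]
        _ = (t * h * t⁻¹) * t * (t * h * t⁻¹) := by group
    · rw [g_succ r j hj1, g_succ r m hm]
      have hIH := ih (r+1) m hj1 (by omega)
      set t := sig (r+1)
      set a := g (r+1) j
      set b := g (r+1) m
      calc (t * a * t⁻¹) * (t * b * t⁻¹) * (t * a * t⁻¹)
          = t * (a * b * a) * t⁻¹ := by group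
        _ = t * (b * a * b) * t⁻¹ := by rw [hIH]
        _ = (t * b * t⁻¹) * (t * a * t⁻¹) * (t * b * t⁻¹) := by group

lemma comm_sig_g {r K j : ℕ} (h1 : r + 1 ≤ j) (h2 : j + 1 < r + K) :
    sig (j+1) * g r K = g r K * sig (j+1) := by
  have hK : 1 ≤ K := by omega
  have hD : sig (j+1) * AA (r+1) (K-1) = AA (r+1) (K-1) * sig j :=
    Dshift (by omega) h1 (by omega)
  have hD' : sig j * (AA (r+1) (K-1))⁻¹ = (AA (r+1) (K-1))⁻¹ * sig (j+1) :=
    shift_inv hD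
  have hcs : sig j * sig (K+r) = sig (K+r) * sig j := comm_sig (by omega) (by omega)
  show sig (j+1) * (AA (r+1) (K-1) * sig (K+r) * (AA (r+1) (K-1))⁻¹) = _
  calc sig (j+1) * (AA (r+1) (K-1) * sig (K+r) * (AA (r+1) (K-1))⁻¹)
      = (sig (j+1) * AA (r+1) (K-1)) * sig (K+r) * (AA (r+1) (K-1))⁻¹ := by group
    _ = (AA (r+1) (K-1) * sig j) * sig (K+r) * (AA (r+1) (K-1))⁻¹ := by rw [hD]
    _ = AA (r+1) (K-1) * (sig j * sig (K+r)) * (AA (r+1) (K-1))⁻¹ := by group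
    _ = AA (r+1) (K-1) * (sig (K+r) * sig j) * (AA (r+1) (K-1))⁻¹ := by rw [hcs]
    _ = AA (r+1) (K-1) * sig (K+r) * (sig j * (AA (r+1) (K-1))⁻¹) := by group
    _ = AA (r+1) (K-1) * sig (K+r) * ((AA (r+1) (K-1))⁻¹ * sig (j+1)) := by rw [hD']
    _ = (AA (r+1) (K-1) * sig (K+r) * (AA (r+1) (K-1))⁻¹) * sig (j+1) := by group

lemma comm_g_g : ∀ m ρ r K, 1 ≤ m → 1 ≤ ρ → m + ρ + 1 ≤ K →
    g r K * g (r+ρ) m = g (r+ρ) m * g r K := by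
  intro m
  induction m with
  | zero => omega
  | succ m ih =>
    intro ρ r K _ hρ hK
    rcases Nat.eq_zero_or_pos m with rfl | hm
    · rw [g_one]
      exact (comm_sig_g (by omega) (by omega)).symm
    · rw [g_succ (r+ρ) m hm]
      have h1 : sig (r+ρ+1) * g r K = g r K * sig (r+ρ+1) :=
        comm_sig_g (by omega) (by omega)
      have h1' : g r K * (sig (r+ρ+1))⁻¹ = (sig (r+ρ+1))⁻¹ * g r K :=
        shift_inv h1.symm
      have h2 : g r K * g (r+ρ+1) m = g (r+ρ+1) m * g r K := by
        rw [show r+ρ+1 = r+(ρ+1) by omega]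
        exact ih (ρ+1) r K hm (by omega) (by omega)
      set t := sig (r+ρ+1)
      set c := g (r+ρ+1) m
      calc g r K * (t * c * t⁻¹)
          = (g r K * t) * c * t⁻¹ := by group
        _ = (t * g r K) * c * t⁻¹ := by rw [← h1]
        _ = t * (g r K * c) * t⁻¹ := by group
        _ = t * (c * g r K) * t⁻¹ := by rw [h2]
        _ = t * c * (g r K * t⁻¹) := by group
        _ = t * c * (t⁻¹ * g r K) := by rw [h1']
        _ = t * c * t⁻¹ * g r K := by group

lemma comm_E : ∀ j r k l, 1 ≤ j → j < k → k < l →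
    g r l * ((g r j)⁻¹ * g r k * g r j) = ((g r j)⁻¹ * g r k * g r j) * g r l := by
  intro j
  induction j with
  | zero => omega
  | succ j ih =>
    intro r k l hj hjk hkl
    obtain ⟨kb, rfl⟩ : ∃ m, k = m + 1 := ⟨k - 1, by omega⟩
    obtain ⟨lb, rfl⟩ : ∃ m, l = m + 1 := ⟨l - 1, by omega⟩
    have hkb : 1 ≤ kb := by omega
    have hlb : 1 ≤ lb := by omega
    rcases Nat.eq_zero_or_pos j with rfl | hj1
    · have hX : (g r 1)⁻¹ * g r (kb+1) * g r 1 = g (r+1) kb := by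
        rw [g_one, g_succ r kb hkb]; group
      rw [hX]
      exact comm_g_g kb 1 r (lb+1) hkb le_rfl (by omega)
    · rw [g_succ r j hj1, g_succ r kb hkb, g_succ r lb hlb]
      have hIH := ih (r+1) kb lb hj1 (by omega) (by omega)
      set t := sig (r+1)
      set a := g (r+1) j
      set b := g (r+1) kb
      set c := g (r+1) lb
      calc (t * c * t⁻¹) * ((t * a * t⁻¹)⁻¹ * (t * b * t⁻¹) * (t * a * t⁻¹))
          = t * (c * (a⁻¹ * b * a)) * t⁻¹ := by group
        _ = t * ((a⁻¹ * b * a) * c) * t⁻¹ := by rw [hIH]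
        _ = ((t * a * t⁻¹)⁻¹ * (t * b * t⁻¹) * (t * a * t⁻¹)) * (t * c * t⁻¹) := by group

lemma gamma_eq_g {k : ℕ} (hk : 1 ≤ k) : γ k = g 0 k := by
  have h1 : ascProd sig 1 (k-1) = AA 1 (k-1) := by
    unfold ascProd AA
    rw [Nat.add_sub_cancel]
  have h2 : descProd (fun i => (sig i)⁻¹) (k-1) 1 = (AA 1 (k-1))⁻¹ := by
    unfold descProd AA
    rw [Nat.add_sub_cancel, List.prod_inv_reverse, List.map_map]
    rfl
  show ascProd sig 1 (k-1) * sig k * descProd (fun i => (sig i)⁻¹) (k-1) 1 = _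
  rw [h1, h2]
  show _ = AA (0+1) (k-1) * sig (k+0) * (AA (0+1) (k-1))⁻¹
  norm_num

end SG

/-- The square roots of free generators satisfy the star-graph relations:
`γ_j γ_k γ_j = γ_k γ_j γ_k` for all `j, k ≥ 1`, and
`γ_l γ_k γ_j γ_l = γ_k γ_j γ_l γ_k = γ_j γ_l γ_k γ_j` for all `1 ≤ j < k < l`. -/
theorem gamma_star_graph_relations :
    (∀ j k : ℕ, 1 ≤ j → 1 ≤ k → γ j * γ k * γ j = γ k * γ j * γ k) ∧
    (∀ j k l : ℕ, 1 ≤ j → j < k → k < l →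
      γ l * γ k * γ j * γ l = γ k * γ j * γ l * γ k ∧
      γ k * γ j * γ l * γ k = γ j * γ l * γ k * γ j) := by
  have braid : ∀ j k : ℕ, 1 ≤ j → 1 ≤ k → γ j * γ k * γ j = γ k * γ j * γ k := by
    intro j k hj hk
    rcases lt_trichotomy j k with h | rfl | h
    · rw [SG.gamma_eq_g hj, SG.gamma_eq_g hk]
      exact SG.braid_g j 0 k hj h
    · rfl
    · rw [SG.gamma_eq_g hj, SG.gamma_eq_g hk]
      exact (SG.braid_g k 0 j hk h).symm
  refine ⟨braid, ?_⟩
  intro j k l hj hjk hkl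
  have hk : 1 ≤ k := by omega
  have hl : 1 ≤ l := by omega
  have hE : γ l * ((γ j)⁻¹ * γ k * γ j) = ((γ j)⁻¹ * γ k * γ j) * γ l := by
    rw [SG.gamma_eq_g hj, SG.gamma_eq_g hk, SG.gamma_eq_g hl]
    exact SG.comm_E j 0 k l hj hjk hkl
  have hbc := braid j k hj hk
  have hX : γ k * γ j * (γ k)⁻¹ = (γ j)⁻¹ * γ k * γ j := by
    calc γ k * γ j * (γ k)⁻¹
        = (γ j)⁻¹ * (γ j * γ k * γ j) * (γ j)⁻¹ * γ j * (γ k)⁻¹ := by group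
      _ = (γ j)⁻¹ * (γ k * γ j * γ k) * (γ j)⁻¹ * γ j * (γ k)⁻¹ := by rw [hbc]
      _ = (γ j)⁻¹ * γ k * γ j := by group
  have hklb := braid k l hk hl
  have hjlb := braid j l hj hl
  have eq1 : γ l * γ k * γ j * γ l = γ k * γ j * γ l * γ k := by
    calc γ l * γ k * γ j * γ l
        = γ l * ((γ k * γ j * (γ k)⁻¹) * (γ k * γ l)) := by group
      _ = γ l * (((γ j)⁻¹ * γ k * γ j) * (γ k * γ l)) := by rw [hX]
      _ = (γ l * ((γ j)⁻¹ * γ k * γ j)) * (γ k * γ l) := by group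
      _ = (((γ j)⁻¹ * γ k * γ j) * γ l) * (γ k * γ l) := by rw [hE]
      _ = ((γ j)⁻¹ * γ k * γ j) * (γ l * γ k * γ l) := by group
      _ = ((γ j)⁻¹ * γ k * γ j) * (γ k * γ l * γ k) := by rw [← hklb]
      _ = (γ k * γ j * (γ k)⁻¹) * (γ k * γ l * γ k) := by rw [← hX]
      _ = γ k * γ j * γ l * γ k := by group
  refine ⟨eq1, ?_⟩
  have eq2 : γ j * γ l * γ k * γ j = γ l * γ k * γ j * γ l := by
    calc γ j * γ l * γ k * γ j
        = (γ j * γ l * γ j) * ((γ j)⁻¹ * γ k * γ j) := by group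
      _ = (γ l * γ j * γ l) * ((γ j)⁻¹ * γ k * γ j) := by rw [hjlb]
      _ = (γ l * γ j) * (γ l * ((γ j)⁻¹ * γ k * γ j)) := by group
      _ = (γ l * γ j) * (((γ j)⁻¹ * γ k * γ j) * γ l) := by rw [hE]
      _ = γ l * γ k * γ j * γ l := by group
  rw [eq2, eq1]
end

section
/- In the braid group B∞, the square roots of free generators satisfy γ_3 γ_2 γ_1 γ_3 = γ_2 γ_1 γ_3 γ_2, but after interchanging the subscripts 1 and 2 the corresponding identity fails: γ_3 γ_1 γ_2 γ_3 ≠ γ_1 γ_2 γ_3 γ_1. (Hence the sequence (γ_n) is not exchangeable.) -/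
set_option linter.unusedTactic false


/-- Generator images for the Artin action of `σ_{n+1}`. -/
def aFun (n : ℕ) : ℕ → FreeGroup ℕ := fun j =>
  if j = n then FreeGroup.of n * FreeGroup.of (n+1) * (FreeGroup.of n)⁻¹
  else if j = n+1 then FreeGroup.of n else FreeGroup.of j

def bFun (n : ℕ) : ℕ → FreeGroup ℕ := fun j =>
  if j = n then FreeGroup.of (n+1)
  else if j = n+1 then (FreeGroup.of (n+1))⁻¹ * FreeGroup.of n * FreeGroup.of (n+1)
  else FreeGroup.of j

def aHom (n : ℕ) : FreeGroup ℕ →* FreeGroup ℕ := FreeGroup.lift (aFun n)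
def bHom (n : ℕ) : FreeGroup ℕ →* FreeGroup ℕ := FreeGroup.lift (bFun n)

lemma aHom_of (n j : ℕ) : aHom n (FreeGroup.of j) = aFun n j := FreeGroup.lift_apply_of
lemma bHom_of (n j : ℕ) : bHom n (FreeGroup.of j) = bFun n j := FreeGroup.lift_apply_of

lemma aFun_self (n : ℕ) :
    aFun n n = FreeGroup.of n * FreeGroup.of (n+1) * (FreeGroup.of n)⁻¹ := if_pos rfl
lemma aFun_succ (n : ℕ) : aFun n (n+1) = FreeGroup.of n := by simp [aFun]
lemma aFun_of_ne {n j : ℕ} (h1 : j ≠ n) (h2 : j ≠ n+1) : aFun n j = FreeGroup.of j := by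
  simp [aFun, h1, h2]
lemma bFun_self (n : ℕ) : bFun n n = FreeGroup.of (n+1) := if_pos rfl
lemma bFun_succ (n : ℕ) :
    bFun n (n+1) = (FreeGroup.of (n+1))⁻¹ * FreeGroup.of n * FreeGroup.of (n+1) := by
  simp [bFun]
lemma bFun_of_ne {n j : ℕ} (h1 : j ≠ n) (h2 : j ≠ n+1) : bFun n j = FreeGroup.of j := by
  simp [bFun, h1, h2]

lemma aHom_bHom (n : ℕ) : (aHom n).comp (bHom n) = MonoidHom.id _ := by
  apply FreeGroup.ext_hom
  intro j
  by_cases h1 : j = n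
  · subst h1
    simp only [MonoidHom.comp_apply, MonoidHom.id_apply, bHom_of, bFun_self, aHom_of, aFun_succ]
  · by_cases h2 : j = n + 1
    · subst h2
      simp only [MonoidHom.comp_apply, MonoidHom.id_apply, bHom_of, bFun_succ, map_mul,
        map_inv, aHom_of, aFun_self, aFun_succ]
      group
    · simp only [MonoidHom.comp_apply, MonoidHom.id_apply, bHom_of, bFun_of_ne h1 h2,
        aHom_of, aFun_of_ne h1 h2]

lemma bHom_aHom (n : ℕ) : (bHom n).comp (aHom n) = MonoidHom.id _ := by
  apply FreeGroup.ext_hom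
  intro j
  by_cases h1 : j = n
  · subst h1
    simp only [MonoidHom.comp_apply, MonoidHom.id_apply, aHom_of, aFun_self, map_mul,
      map_inv, bHom_of, bFun_self, bFun_succ]
    group
  · by_cases h2 : j = n + 1
    · subst h2
      simp only [MonoidHom.comp_apply, MonoidHom.id_apply, aHom_of, aFun_succ, bHom_of,
        bFun_self]
    · simp only [MonoidHom.comp_apply, MonoidHom.id_apply, aHom_of, aFun_of_ne h1 h2,
        bHom_of, bFun_of_ne h1 h2]

/-- The Artin automorphism of the free group corresponding to `σ_{n+1}`. -/
def aEquiv (n : ℕ) : MulAut (FreeGroup ℕ) :=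
  { toFun := aHom n
    invFun := bHom n
    left_inv := fun x => DFunLike.congr_fun (bHom_aHom n) x
    right_inv := fun x => DFunLike.congr_fun (aHom_bHom n) x
    map_mul' := map_mul _ }

lemma aEquiv_apply (n : ℕ) (x : FreeGroup ℕ) : aEquiv n x = aHom n x := rfl

lemma braidA (n : ℕ) :
    aEquiv n * aEquiv (n+1) * aEquiv n = aEquiv (n+1) * aEquiv n * aEquiv (n+1) := by
  have F1 : aFun (n+1) n = FreeGroup.of n := aFun_of_ne (by omega) (by omega)
  have F2 : aFun n (n+1+1) = FreeGroup.of (n+1+1) := aFun_of_ne (by omega) (by omega)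
  have key : ((aHom n).comp ((aHom (n+1)).comp (aHom n)))
      = ((aHom (n+1)).comp ((aHom n).comp (aHom (n+1)))) := by
    apply FreeGroup.ext_hom
    intro j
    by_cases h1 : j = n
    · subst h1
      simp only [MonoidHom.comp_apply, aHom_of, aFun_self, aFun_succ, map_mul, map_inv,
        F1, F2]
      group
    · by_cases h2 : j = n + 1
      · subst h2
        simp only [MonoidHom.comp_apply, aHom_of, aFun_self, aFun_succ, map_mul, map_inv,
          F1, F2]
      · by_cases h3 : j = n + 1 + 1
        · subst h3
          simp only [MonoidHom.comp_apply, aHom_of, aFun_self, aFun_succ, map_mul, map_inv,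
            F1, F2]
        · have e1 : j ≠ n + 1 + 1 := h3
          simp only [MonoidHom.comp_apply, aHom_of, aFun_of_ne h1 h2,
            aFun_of_ne h2 e1, aFun_of_ne h1 h2]
  apply MulEquiv.ext
  intro x
  have hx := DFunLike.congr_fun key x
  simpa only [MonoidHom.comp_apply, MulAut.mul_apply, aEquiv_apply] using hx

lemma commA {n m : ℕ} (h : n + 1 < m) :
    aEquiv n * aEquiv m = aEquiv m * aEquiv n := by
  have F1 : aFun m n = FreeGroup.of n := aFun_of_ne (by omega) (by omega)
  have F2 : aFun m (n+1) = FreeGroup.of (n+1) := aFun_of_ne (by omega) (by omega)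
  have F3 : aFun n m = FreeGroup.of m := aFun_of_ne (by omega) (by omega)
  have F4 : aFun n (m+1) = FreeGroup.of (m+1) := aFun_of_ne (by omega) (by omega)
  have key : ((aHom n).comp (aHom m)) = ((aHom m).comp (aHom n)) := by
    apply FreeGroup.ext_hom
    intro j
    by_cases h1 : j = n
    · subst h1
      simp only [MonoidHom.comp_apply, aHom_of, aFun_self, aFun_succ, map_mul, map_inv,
        F1, F2, F3, F4]
    · by_cases h2 : j = n + 1
      · subst h2
        simp only [MonoidHom.comp_apply, aHom_of, aFun_self, aFun_succ, map_mul, map_inv,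
          F1, F2, F3, F4]
      · by_cases h3 : j = m
        · subst h3
          simp only [MonoidHom.comp_apply, aHom_of, aFun_self, aFun_succ, map_mul, map_inv,
            F1, F2, F3, F4]
        · by_cases h4 : j = m + 1
          · subst h4
            simp only [MonoidHom.comp_apply, aHom_of, aFun_self, aFun_succ, map_mul,
              map_inv, F1, F2, F3, F4]
          · simp only [MonoidHom.comp_apply, aHom_of, aFun_of_ne h1 h2, aFun_of_ne h3 h4]
  apply MulEquiv.ext
  intro x
  have hx := DFunLike.congr_fun key x
  simpa only [MonoidHom.comp_apply, MulAut.mul_apply, aEquiv_apply] using hx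

lemma artin_rels : ∀ r ∈ braidRels,
    FreeGroup.lift (fun i : ℕ+ => aEquiv ((i : ℕ) - 1)) r = 1 := by
  rintro r ⟨i, j, ⟨h, rfl⟩ | ⟨h, rfl⟩⟩
  · simp only [map_mul, map_inv, FreeGroup.lift_apply_of]
    rw [mul_inv_eq_one]
    have hi : 1 ≤ (i : ℕ) := i.one_le
    have hj : (j : ℕ) - 1 = ((i : ℕ) - 1) + 1 := by omega
    rw [hj]
    exact braidA _
  · simp only [map_mul, map_inv, FreeGroup.lift_apply_of]
    rw [mul_inv_eq_one]
    have hi : 1 ≤ (i : ℕ) := i.one_le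
    have hj : 1 ≤ (j : ℕ) := j.one_le
    exact commA (by omega)

/-- The Artin representation of `B∞`. -/
def ψ : BraidInf →* MulAut (FreeGroup ℕ) := PresentedGroup.toGroup artin_rels

lemma ψ_sig {k : ℕ} (h : 0 < k) : ψ (sig k) = aEquiv (k - 1) := by
  rw [sig, dif_pos h, ψ]
  exact PresentedGroup.toGroup.of artin_rels

/-- A concrete assignment of permutations to free-group generators used to
separate two elements of the free group. -/
def φperm : ℕ → Equiv.Perm (Fin 4) := fun n =>
  if n = 0 then Equiv.swap 0 2 * Equiv.swap 2 1
  else if n = 1 then Equiv.swap 0 2 * Equiv.swap 2 3 * Equiv.swap 3 1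
  else if n = 2 then Equiv.swap 2 3
  else if n = 3 then Equiv.swap 0 1 * Equiv.swap 1 2
  else 1

lemma aEquiv_inv_apply (n : ℕ) (x : FreeGroup ℕ) : (aEquiv n)⁻¹ x = bHom n x := rfl

lemma AF00 : aFun 0 0 = FreeGroup.of 0 * FreeGroup.of 1 * (FreeGroup.of 0)⁻¹ := by norm_num [aFun]
lemma BF00 : bFun 0 0 = FreeGroup.of 1 := by norm_num [bFun]
lemma AF01 : aFun 0 1 = FreeGroup.of 0 := by norm_num [aFun]
lemma BF01 : bFun 0 1 = (FreeGroup.of 1)⁻¹ * FreeGroup.of 0 * FreeGroup.of 1 := by norm_num [bFun]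
lemma AF02 : aFun 0 2 = FreeGroup.of 2 := by norm_num [aFun]
lemma BF02 : bFun 0 2 = FreeGroup.of 2 := by norm_num [bFun]
lemma AF03 : aFun 0 3 = FreeGroup.of 3 := by norm_num [aFun]
lemma BF03 : bFun 0 3 = FreeGroup.of 3 := by norm_num [bFun]
lemma AF10 : aFun 1 0 = FreeGroup.of 0 := by norm_num [aFun]
lemma BF10 : bFun 1 0 = FreeGroup.of 0 := by norm_num [bFun]
lemma AF11 : aFun 1 1 = FreeGroup.of 1 * FreeGroup.of 2 * (FreeGroup.of 1)⁻¹ := by norm_num [aFun]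
lemma BF11 : bFun 1 1 = FreeGroup.of 2 := by norm_num [bFun]
lemma AF12 : aFun 1 2 = FreeGroup.of 1 := by norm_num [aFun]
lemma BF12 : bFun 1 2 = (FreeGroup.of 2)⁻¹ * FreeGroup.of 1 * FreeGroup.of 2 := by norm_num [bFun]
lemma AF13 : aFun 1 3 = FreeGroup.of 3 := by norm_num [aFun]
lemma BF13 : bFun 1 3 = FreeGroup.of 3 := by norm_num [bFun]
lemma AF20 : aFun 2 0 = FreeGroup.of 0 := by norm_num [aFun]
lemma BF20 : bFun 2 0 = FreeGroup.of 0 := by norm_num [bFun]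
lemma AF21 : aFun 2 1 = FreeGroup.of 1 := by norm_num [aFun]
lemma BF21 : bFun 2 1 = FreeGroup.of 1 := by norm_num [bFun]
lemma AF22 : aFun 2 2 = FreeGroup.of 2 * FreeGroup.of 3 * (FreeGroup.of 2)⁻¹ := by norm_num [aFun]
lemma BF22 : bFun 2 2 = FreeGroup.of 3 := by norm_num [bFun]
lemma AF23 : aFun 2 3 = FreeGroup.of 2 := by norm_num [aFun]
lemma BF23 : bFun 2 3 = (FreeGroup.of 3)⁻¹ * FreeGroup.of 2 * FreeGroup.of 3 := by norm_num [bFun]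


set_option maxRecDepth 40000 in
set_option maxHeartbeats 1000000 in
/-- `γ_3 γ_2 γ_1 γ_3 = γ_2 γ_1 γ_3 γ_2`, but interchanging the subscripts `1` and `2` the
corresponding identity fails: `γ_3 γ_1 γ_2 γ_3 ≠ γ_1 γ_2 γ_3 γ_1`. -/
theorem gamma_relation_not_exchangeable :
    γ 3 * γ 2 * γ 1 * γ 3 = γ 2 * γ 1 * γ 3 * γ 2 ∧
    γ 3 * γ 1 * γ 2 * γ 3 ≠ γ 1 * γ 2 * γ 3 * γ 1 := by
  have hγ1 : γ 1 = sig 1 := by simp [γ, ascProd, descProd, List.range']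
  have hγ2 : γ 2 = sig 1 * sig 2 * (sig 1)⁻¹ := by simp [γ, ascProd, descProd, List.range']
  have hγ3 : γ 3 = sig 1 * sig 2 * sig 3 * (sig 2)⁻¹ * (sig 1)⁻¹ := by
    simp [γ, ascProd, descProd, List.range']; group
  have hs : ∀ (k : ℕ) (hk : 0 < k), sig k = PresentedGroup.of (⟨k, hk⟩ : ℕ+) :=
    fun k hk => dif_pos hk
  constructor
  · have r23 : sig 2 * sig 3 * sig 2 = sig 3 * sig 2 * sig 3 := by
      rw [hs 2 (by norm_num), hs 3 (by norm_num)]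
      exact braid_rel1 rfl
    have c13 : sig 1 * sig 3 = sig 3 * sig 1 := by
      rw [hs 1 (by norm_num), hs 3 (by norm_num)]
      exact braid_rel2 (by norm_num)
    calc γ 3 * γ 2 * γ 1 * γ 3
        = sig 1 * sig 2 * (sig 3 * sig 1) * (sig 2 * sig 3 * (sig 2)⁻¹) * (sig 1)⁻¹ := by
          rw [hγ1, hγ2, hγ3]; group
      _ = sig 1 * sig 2 * (sig 1 * sig 3) * (sig 2 * sig 3 * (sig 2)⁻¹) * (sig 1)⁻¹ := by
          rw [c13]
      _ = sig 1 * sig 2 * sig 1 * (sig 3 * sig 2 * sig 3) * (sig 2)⁻¹ * (sig 1)⁻¹ := by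
          group
      _ = sig 1 * sig 2 * sig 1 * (sig 2 * sig 3 * sig 2) * (sig 2)⁻¹ * (sig 1)⁻¹ := by
          rw [r23]
      _ = γ 2 * γ 1 * γ 3 * γ 2 := by rw [hγ1, hγ2, hγ3]; group
  · intro h
    rw [hγ1, hγ2, hγ3] at h
    have p1 : ψ (sig 1) = aEquiv 0 := ψ_sig (by norm_num)
    have p2 : ψ (sig 2) = aEquiv 1 := ψ_sig (by norm_num)
    have p3 : ψ (sig 3) = aEquiv 2 := ψ_sig (by norm_num)
    have h2 := congrArg (fun g : BraidInf => ψ g (FreeGroup.of 0)) h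
    simp only [map_mul, map_inv, p1, p2, p3, MulAut.mul_apply,
      aEquiv_inv_apply, aEquiv_apply, aHom_of, bHom_of,
      AF00, AF01, AF02, AF03, AF10, AF11, AF12, AF13, AF20, AF21, AF22, AF23,
      BF00, BF01, BF02, BF03, BF10, BF11, BF12, BF13, BF20, BF21, BF22, BF23,
      mul_inv_rev, inv_inv] at h2
    have h3 := congrArg (FreeGroup.lift φperm) h2
    simp only [map_mul, map_inv, FreeGroup.lift_apply_of] at h3
    norm_num only [φperm] at h3
    exact absurd h3 (by decide)
end

section
/- For every n ≥ 3, the braid group B_n is also presented by generators g̃_1, …, g̃_{n−1} subject to the relations g̃_l (g̃_k g̃_{k+1} ⋯ g̃_{l−2}) g̃_{l−1} g̃_l = g̃_{l−1} g̃_l (g̃_k g̃_{k+1} ⋯ g̃_{l−2}) g̃_{l−1} for all 0 < k < l < n (where for k = l−1 the inner product g̃_k ⋯ g̃_{l−2} is empty); i.e., the group with this presentation is isomorphic to B_n. -/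
/-- The letter `g̃_j` in the free group on generators indexed by `{k // 1 ≤ k ∧ k < n}`
(`1` for out-of-range indices, which never occur in the relations below). -/
def ebtGen (n : ℕ) (j : ℕ) : FreeGroup {k : ℕ // 1 ≤ k ∧ k < n} :=
  if h : 1 ≤ j ∧ j < n then FreeGroup.of ⟨j, h⟩ else 1

/-- The relations `g̃_l (g̃_k g̃_{k+1} ⋯ g̃_{l−2}) g̃_{l−1} g̃_l
= g̃_{l−1} g̃_l (g̃_k g̃_{k+1} ⋯ g̃_{l−2}) g̃_{l−1}` for `0 < k < l < n`. -/
def ebTildeRels (n : ℕ) : Set (FreeGroup {k : ℕ // 1 ≤ k ∧ k < n}) :=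
  {r | ∃ k l : ℕ, 0 < k ∧ k < l ∧ l < n ∧
    r = (ebtGen n l * ascProd (ebtGen n) k (l - 2) * ebtGen n (l - 1) * ebtGen n l) *
        (ebtGen n (l - 1) * ebtGen n l * ascProd (ebtGen n) k (l - 2) * ebtGen n (l - 1))⁻¹}


namespace BraidWork

variable {G : Type*} [Group G]

theorem ascProd_empty (f : ℕ → G) {a b : ℕ} (h : b < a) : ascProd f a b = 1 := by
  unfold ascProd
  rw [show b + 1 - a = 0 by omega]
  simp

theorem ascProd_single (f : ℕ → G) (a : ℕ) : ascProd f a a = f a := by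
  unfold ascProd
  rw [show a + 1 - a = 1 by omega]
  simp

theorem ascProd_concat (f : ℕ → G) {a b : ℕ} (h : a ≤ b + 1) :
    ascProd f a (b + 1) = ascProd f a b * f (b + 1) := by
  unfold ascProd
  rw [show b + 1 + 1 - a = (b + 1 - a) + 1 by omega, List.range'_concat]
  simp only [List.map_append, List.prod_append, List.map_cons, List.map_nil,
    List.prod_cons, List.prod_nil, mul_one]
  rw [show a + 1 * (b + 1 - a) = b + 1 by omega]

theorem ascProd_cons (f : ℕ → G) {a b : ℕ} (h : a ≤ b) :
    ascProd f a b = f a * ascProd f (a + 1) b := by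
  unfold ascProd
  rw [show b + 1 - a = (b - a) + 1 by omega, List.range'_succ]
  rw [show b + 1 - (a + 1) = b - a by omega]
  simp

theorem ascProd_split (f : ℕ → G) {a c b : ℕ} (h1 : a ≤ c + 1) (h2 : c ≤ b) :
    ascProd f a b = ascProd f a c * ascProd f (c + 1) b := by
  unfold ascProd
  rw [← List.prod_append, ← List.map_append]
  have h4 : List.range' a (c+1-a) ++ List.range' (c+1) (b+1-(c+1)) = List.range' a (b+1-a) := by
    have h5 := List.range'_append (s := a) (m := c+1-a) (n := b+1-(c+1)) (step := 1)
    rw [show a + 1*(c+1-a) = c+1 from by omega] at h5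
    rw [h5]
    congr 1
    omega
  rw [h4]

/-- A braid family: `s 1, s 2, …, s (n-1)` satisfy the Artin relations (junk elsewhere). -/
structure IsBraidFam (s : ℕ → G) (n : ℕ) : Prop where
  adj : ∀ i, 1 ≤ i → i + 2 ≤ n → s i * s (i+1) * s i = s (i+1) * s i * s (i+1)
  comm : ∀ i j, 1 ≤ i → i + 2 ≤ j → j < n → s i * s j = s j * s i

namespace IsBraidFam

variable {s : ℕ → G} {n : ℕ} (hs : IsBraidFam s n)
include hs

theorem comm_ascProd {i a b : ℕ} (ha : 1 ≤ a) (hb : b + 2 ≤ i) (hi : i < n) :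
    s i * ascProd s a b = ascProd s a b * s i := by
  rcases le_or_gt a b with h | h
  · induction b with
  | zero => omega
  | succ m ih =>
    rw [ascProd_concat s (by omega)]
    have hc := hs.comm (m+1) i (by omega) (by omega) hi
    rcases Nat.lt_or_ge a (m+1) with h' | h'
    · rw [← mul_assoc, ih (by omega) (by omega), mul_assoc, ← hc, ← mul_assoc]
    · have : a = m + 1 := by omega
      subst this
      rw [ascProd_empty s (by omega)]
      simpa using hc.symm
  · rw [ascProd_empty s h]; group

/-- shift: `Δ_j s i Δ_j⁻¹ = s (i+1)` for `1 ≤ i`, `i + 1 ≤ j`, `j < n`,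
where `Δ_j = s 1 ⋯ s j`. -/
theorem delta_shift {i j : ℕ} (hi : 1 ≤ i) (hij : i + 1 ≤ j) (hj : j < n) :
    ascProd s 1 j * s i = s (i+1) * ascProd s 1 j := by
  induction j, hij using Nat.le_induction with
  | base =>
    have hP : ascProd s 1 (i+1) = ascProd s 1 (i-1) * (s i * s (i+1)) := by
      rcases Nat.eq_or_lt_of_le hi with h1 | h1
      · rw [← h1]
        rw [show (1:ℕ)+1 = 2 by rfl, ascProd_concat s (show (1:ℕ) ≤ 1+1 by omega),
          ascProd_single, ascProd_empty s (show (0:ℕ) < 1 by omega)]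
        group
      · rw [ascProd_split s (a := 1) (c := i - 1) (b := i + 1) (by omega) (by omega),
          show i - 1 + 1 = i by omega, ascProd_concat s (a := i) (b := i) (by omega),
          ascProd_single]
    have hcm : s (i+1) * ascProd s 1 (i-1) = ascProd s 1 (i-1) * s (i+1) := by
      rcases Nat.lt_or_ge 1 i with h1 | h1
      · exact hs.comm_ascProd (by omega) (by omega) (by omega)
      · have : i = 1 := by omega
        subst this
        simp [ascProd_empty s (show (0:ℕ) < 1 by omega)]
    rw [hP]
    calc ascProd s 1 (i-1) * (s i * s (i+1)) * s i
        = ascProd s 1 (i-1) * (s i * s (i+1) * s i) := by group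
      _ = ascProd s 1 (i-1) * (s (i+1) * (s i * s (i+1))) := by
            rw [hs.adj i hi (by omega)]; group
      _ = (ascProd s 1 (i-1) * s (i+1)) * (s i * s (i+1)) := by group
      _ = s (i+1) * (ascProd s 1 (i-1) * (s i * s (i+1))) := by rw [← hcm]; group
  | succ m hm ih =>
    rw [ascProd_concat s (by omega), mul_assoc, ← hs.comm i (m+1) hi (by omega) hj,
      ← mul_assoc, ih (by omega), mul_assoc]

end IsBraidFam

end BraidWork

namespace BraidWork

variable {G : Type*} [Group G] {H : Type*} [Group H]

/-- The fundamental involutive transformation between braid families and EB-families: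
`(ggF f) k = (f 1 ⋯ f (k-1)) * (f k)⁻¹ * (f 1 ⋯ f (k-1))⁻¹`. -/
def ggF (f : ℕ → G) (k : ℕ) : G :=
  ascProd f 1 (k - 1) * (f k)⁻¹ * (ascProd f 1 (k - 1))⁻¹

/-- The EB-relation `g l (g k ⋯ g (l-2)) g (l-1) g l = g (l-1) g l (g k ⋯ g (l-2)) g (l-1)`. -/
def EBRel (g : ℕ → G) (k l : ℕ) : Prop :=
  g l * ascProd g k (l - 2) * g (l - 1) * g l =
    g (l - 1) * g l * ascProd g k (l - 2) * g (l - 1)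

def IsEBFam (g : ℕ → G) (n : ℕ) : Prop :=
  ∀ k l, 1 ≤ k → k < l → l < n → EBRel g k l

theorem ascProd_ggF (f : ℕ → G) (j : ℕ) : ascProd (ggF f) 1 j = (ascProd f 1 j)⁻¹ := by
  induction j with
  | zero => simp [ascProd_empty _ (show (0:ℕ) < 1 by omega)]
  | succ m ih =>
    rw [ascProd_concat _ (by omega), ascProd_concat f (by omega), ih]
    unfold ggF
    rw [show m + 1 - 1 = m by omega]
    group

theorem ggF_ggF (f : ℕ → G) (k : ℕ) : ggF (ggF f) k = f k := by
  rw [ggF, ascProd_ggF, ggF]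
  group

theorem ascProd_map (φ : G →* H) (f : ℕ → G) (a b : ℕ) :
    φ (ascProd f a b) = ascProd (fun i => φ (f i)) a b := by
  unfold ascProd
  rw [MonoidHom.map_list_prod, List.map_map]
  rfl

theorem ggF_map (φ : G →* H) (f : ℕ → G) (k : ℕ) :
    φ (ggF f k) = ggF (fun i => φ (f i)) k := by
  unfold ggF
  simp only [map_mul, map_inv, ascProd_map]

/-- From a braid relation `aba = bab` : `a * b⁻¹ * a⁻¹ = b⁻¹ * a⁻¹ * b`. -/
theorem braid_conj {a b : G} (h : a * b * a = b * a * b) :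
    a * b⁻¹ * a⁻¹ = b⁻¹ * a⁻¹ * b := by
  have hinv : a⁻¹ * (b⁻¹ * a⁻¹) = b⁻¹ * (a⁻¹ * b⁻¹) := by
    have h' := congrArg (fun z => z⁻¹) h
    simpa only [mul_inv_rev] using h'
  calc a * b⁻¹ * a⁻¹ = a * (b⁻¹ * (a⁻¹ * b⁻¹)) * b := by group
    _ = a * (a⁻¹ * (b⁻¹ * a⁻¹)) * b := by rw [← hinv]
    _ = b⁻¹ * a⁻¹ * b := by group

/-- Core identity for both EB-adjacent relations. -/
theorem adj_core {a b : G} (h : a * b * a = b * a * b) :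
    (a * b⁻¹ * a⁻¹) * a⁻¹ * (a * b⁻¹ * a⁻¹) = a⁻¹ * (a * b⁻¹ * a⁻¹) * a⁻¹ := by
  have hx := braid_conj h
  calc (a * b⁻¹ * a⁻¹) * a⁻¹ * (a * b⁻¹ * a⁻¹)
      = (a * b⁻¹ * a⁻¹) * b⁻¹ * a⁻¹ := by group
    _ = (b⁻¹ * a⁻¹ * b) * b⁻¹ * a⁻¹ := by rw [hx]
    _ = b⁻¹ * a⁻¹ * a⁻¹ := by group
    _ = a⁻¹ * (a * b⁻¹ * a⁻¹) * a⁻¹ := by group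

namespace IsBraidFam

variable {s : ℕ → G} {n : ℕ} (hs : IsBraidFam s n)
include hs

/-- Braid families give EB-families (relations of the `γ⁻¹`'s). -/
theorem ggF_isEBFam : IsEBFam (ggF s) n := by
  intro k l hk hkl hln
  have hl2 : 2 ≤ l := by omega
  have hbraid : s (l-1) * s l * s (l-1) = s l * s (l-1) * s l := by
    have := hs.adj (l-1) (by omega) (by omega)
    rw [show l - 1 + 1 = l by omega] at this
    exact this
  have hdec : ascProd s 1 (l-1) = ascProd s 1 (l-2) * s (l-1) := by
    have := ascProd_concat s (a := 1) (b := l-2) (by omega)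
    rw [show l - 2 + 1 = l - 1 by omega] at this
    exact this
  rcases Nat.eq_or_lt_of_le hkl with heq | hlt2
  · -- adjacent case : k = l - 1
    unfold EBRel
    rw [ascProd_empty (ggF s) (show l - 2 < k by omega)]
    unfold ggF
    rw [show l - 1 - 1 = l - 2 by omega, hdec]
    have := adj_core (a := s (l-1)) (b := s l) hbraid
    calc (ascProd s 1 (l-2) * s (l-1)) * (s l)⁻¹ * (ascProd s 1 (l-2) * s (l-1))⁻¹ * 1 *
          (ascProd s 1 (l-2) * (s (l-1))⁻¹ * (ascProd s 1 (l-2))⁻¹) *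
          ((ascProd s 1 (l-2) * s (l-1)) * (s l)⁻¹ * (ascProd s 1 (l-2) * s (l-1))⁻¹)
        = ascProd s 1 (l-2) *
            ((s (l-1) * (s l)⁻¹ * (s (l-1))⁻¹) * (s (l-1))⁻¹ *
              (s (l-1) * (s l)⁻¹ * (s (l-1))⁻¹)) * (ascProd s 1 (l-2))⁻¹ := by group
      _ = ascProd s 1 (l-2) *
            ((s (l-1))⁻¹ * (s (l-1) * (s l)⁻¹ * (s (l-1))⁻¹) * (s (l-1))⁻¹) *
            (ascProd s 1 (l-2))⁻¹ := by rw [this]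
      _ = (ascProd s 1 (l-2) * (s (l-1))⁻¹ * (ascProd s 1 (l-2))⁻¹) *
          ((ascProd s 1 (l-2) * s (l-1)) * (s l)⁻¹ * (ascProd s 1 (l-2) * s (l-1))⁻¹) * 1 *
          (ascProd s 1 (l-2) * (s (l-1))⁻¹ * (ascProd s 1 (l-2))⁻¹) := by group
  · -- k ≤ l - 2
    have hmid : ascProd (ggF s) k (l-2) = ascProd s 1 (k-1) * (ascProd s 1 (l-2))⁻¹ := by
      have hsplit := ascProd_split (ggF s) (a := 1) (c := k-1) (b := l-2)
        (by omega) (by omega)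
      rw [show k - 1 + 1 = k by omega] at hsplit
      have h1 := ascProd_ggF s (k-1)
      have h2 := ascProd_ggF s (l-2)
      rw [h1, h2] at hsplit
      have := congrArg (fun z => ascProd s 1 (k-1) * z) hsplit
      simpa [mul_assoc] using this.symm
    unfold EBRel
    rw [hmid]
    unfold ggF
    rw [show l - 1 - 1 = l - 2 by omega, hdec]
    -- commutation facts
    have hbT : s l * ascProd s 1 (k-1) = ascProd s 1 (k-1) * s l := by
      rcases Nat.eq_or_lt_of_le hk with h1 | h1
      · rw [← h1]; simp [ascProd_empty s (show (0:ℕ) < 1 by omega)]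
      · exact hs.comm_ascProd (by omega) (by omega) (by omega)
    have hbP : s l * ascProd s 1 (l-2) = ascProd s 1 (l-2) * s l := by
      exact hs.comm_ascProd (by omega) (by omega) (by omega)
    have hx : s (l-1) * (s l)⁻¹ * (s (l-1))⁻¹ = (s l)⁻¹ * (s (l-1))⁻¹ * s l :=
      braid_conj hbraid
    set a := s (l-1)
    set b := s l
    set T := ascProd s 1 (k-1)
    set P := ascProd s 1 (l-2)
    -- goal in a, b, T, P
    calc (P * a) * b⁻¹ * (P * a)⁻¹ * (T * P⁻¹) * (P * a⁻¹ * P⁻¹) * ((P * a) * b⁻¹ * (P * a)⁻¹)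
        = P * (a * b⁻¹ * a⁻¹ * (P⁻¹ * T) * b⁻¹ * a⁻¹) * P⁻¹ := by group
      _ = P * (a * b⁻¹ * a⁻¹ * b⁻¹ * (P⁻¹ * T) * a⁻¹) * P⁻¹ := by
          have hbM : (P⁻¹ * T) * b⁻¹ = b⁻¹ * (P⁻¹ * T) := by
            have c1 : Commute b P := hbP
            have c2 : Commute b T := hbT
            exact (Commute.mul_left (c1.inv_left.inv_right.symm) (c2.inv_left.symm)).eq
          calc P * (a * b⁻¹ * a⁻¹ * (P⁻¹ * T) * b⁻¹ * a⁻¹) * P⁻¹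
              = P * (a * b⁻¹ * a⁻¹ * ((P⁻¹ * T) * b⁻¹) * a⁻¹) * P⁻¹ := by group
            _ = P * (a * b⁻¹ * a⁻¹ * (b⁻¹ * (P⁻¹ * T)) * a⁻¹) * P⁻¹ := by rw [hbM]
            _ = P * (a * b⁻¹ * a⁻¹ * b⁻¹ * (P⁻¹ * T) * a⁻¹) * P⁻¹ := by group
      _ = P * (b⁻¹ * a⁻¹ * (P⁻¹ * T) * a⁻¹) * P⁻¹ := by
          have : a * b⁻¹ * a⁻¹ * b⁻¹ = b⁻¹ * a⁻¹ := by
            rw [hx]; group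
          calc P * (a * b⁻¹ * a⁻¹ * b⁻¹ * (P⁻¹ * T) * a⁻¹) * P⁻¹
              = P * ((a * b⁻¹ * a⁻¹ * b⁻¹) * (P⁻¹ * T) * a⁻¹) * P⁻¹ := by group
            _ = P * ((b⁻¹ * a⁻¹) * (P⁻¹ * T) * a⁻¹) * P⁻¹ := by rw [this]
            _ = P * (b⁻¹ * a⁻¹ * (P⁻¹ * T) * a⁻¹) * P⁻¹ := by group
      _ = (P * a⁻¹ * P⁻¹) * ((P * a) * b⁻¹ * (P * a)⁻¹) * (T * P⁻¹) * (P * a⁻¹ * P⁻¹) := by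
          group

end IsBraidFam

end BraidWork

namespace BraidWork

variable {G : Type*} [Group G]

namespace IsEBFamLemmas

variable {g : ℕ → G} {n : ℕ}

theorem ebrel (hg : IsEBFam g n) {k l : ℕ} (hk : 1 ≤ k) (hkl : k < l) (hln : l < n) :
    g l * ascProd g k (l - 2) * g (l - 1) * g l =
      g (l - 1) * g l * ascProd g k (l - 2) * g (l - 1) :=
  hg k l hk hkl hln

/-- adjacent braid relation for the `g`'s themselves. -/
theorem adj_braid (hg : IsEBFam g n) {l : ℕ} (hl : 2 ≤ l) (hln : l < n) :
    g l * g (l-1) * g l = g (l-1) * g l * g (l-1) := by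
  have := ebrel hg (k := l-1) (by omega) (by omega) hln
  rw [ascProd_empty g (show l - 2 < l - 1 by omega)] at this
  simpa using this

/-- E : `g i` commutes with `(g j)⁻¹ * g (j-1) * g j` for `i + 2 ≤ j < n`. -/
theorem E_comm (hg : IsEBFam g n) {i j : ℕ} (hi : 1 ≤ i) (hij : i + 2 ≤ j) (hjn : j < n) :
    g i * ((g j)⁻¹ * g (j-1) * g j) = ((g j)⁻¹ * g (j-1) * g j) * g i := by
  have hA : ascProd g i (j-2) = g i * ascProd g (i+1) (j-2) :=
    ascProd_cons g (by omega)
  have r1 := ebrel hg (k := i) hi (by omega) hjn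
  have r2 := ebrel hg (k := i+1) (by omega) (by omega) hjn
  -- from r2 : A' * g_{j-1} * g_j = g_j⁻¹ * (g_{j-1} * g_j * A' * g_{j-1})
  have h1 : ascProd g (i+1) (j-2) * g (j-1) * g j =
      (g j)⁻¹ * (g (j-1) * g j * ascProd g (i+1) (j-2) * g (j-1)) := by
    rw [← r2]; group
  rw [hA] at r1
  -- r1 : g_j * (g_i * A') * g_{j-1} * g_j = g_{j-1} * g_j * (g_i * A') * g_{j-1}
  have h2 : g j * g i * ((g j)⁻¹ * (g (j-1) * g j * ascProd g (i+1) (j-2) * g (j-1))) =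
      g (j-1) * g j * g i * ascProd g (i+1) (j-2) * g (j-1) := by
    rw [← h1]
    calc g j * g i * (ascProd g (i+1) (j-2) * g (j-1) * g j)
        = g j * (g i * ascProd g (i+1) (j-2)) * g (j-1) * g j := by group
      _ = g (j-1) * g j * (g i * ascProd g (i+1) (j-2)) * g (j-1) := r1
      _ = g (j-1) * g j * g i * ascProd g (i+1) (j-2) * g (j-1) := by group
  set A' := ascProd g (i+1) (j-2) with hA'
  calc g i * ((g j)⁻¹ * g (j-1) * g j)
      = (g j)⁻¹ * (g j * g i * ((g j)⁻¹ * (g (j-1) * g j * A' * g (j-1)))) *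
          ((g (j-1))⁻¹ * (A')⁻¹) := by group
    _ = (g j)⁻¹ * (g (j-1) * g j * g i * A' * g (j-1)) * ((g (j-1))⁻¹ * (A')⁻¹) := by rw [h2]
    _ = ((g j)⁻¹ * g (j-1) * g j) * g i := by group

/-- U : `g i` commutes with `g (j-1) * g j * (g (j-1))⁻¹` for `i + 2 ≤ j < n`. -/
theorem U_comm (hg : IsEBFam g n) {i j : ℕ} (hi : 1 ≤ i) (hij : i + 2 ≤ j) (hjn : j < n) :
    g i * (g (j-1) * g j * (g (j-1))⁻¹) = (g (j-1) * g j * (g (j-1))⁻¹) * g i := by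
  have hb := adj_braid hg (l := j) (by omega) hjn
  -- g_{j-1} * g_j * g_{j-1}⁻¹ = g_j⁻¹ * g_{j-1} * g_j  (braid_conj applied to p*q*p = q*p*q?)
  have key : g (j-1) * g j * (g (j-1))⁻¹ = (g j)⁻¹ * g (j-1) * g j := by
    -- from braid_conj with a := g (j-1), b := (g j)⁻¹ ?  Instead direct:
    -- hb : g_j g_{j-1} g_j = g_{j-1} g_j g_{j-1}
    -- want p q p⁻¹ = q⁻¹ p q with p := g_{j-1}, q := g_j, i.e.
    -- q * (p*q*p⁻¹) = (p * q) ; check: q p q p⁻¹ = p q ⟺ q p q = p q p ✓ = hb.symm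
    have h2 : g j * (g (j-1) * g j * (g (j-1))⁻¹) = g (j-1) * g j := by
      calc g j * (g (j-1) * g j * (g (j-1))⁻¹)
          = (g j * g (j-1) * g j) * (g (j-1))⁻¹ := by group
        _ = (g (j-1) * g j * g (j-1)) * (g (j-1))⁻¹ := by rw [hb]
        _ = g (j-1) * g j := by group
    calc g (j-1) * g j * (g (j-1))⁻¹
        = (g j)⁻¹ * (g j * (g (j-1) * g j * (g (j-1))⁻¹)) := by group
      _ = (g j)⁻¹ * (g (j-1) * g j) := by rw [h2]
      _ = (g j)⁻¹ * g (j-1) * g j := by group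
  rw [key]
  exact E_comm hg hi hij hjn

/-- W : conjugating `g j` by the ascending product `g i ⋯ g (j-1)`. -/
theorem W_conj (hg : IsEBFam g n) {j : ℕ} (hj : 2 ≤ j) (hjn : j < n) :
    ∀ d i, 1 ≤ i → i ≤ j - 1 → j - 1 - i = d →
      ascProd g i (j-1) * g j * (ascProd g i (j-1))⁻¹ = g (j-1) * g j * (g (j-1))⁻¹ := by
  intro d
  induction d with
  | zero =>
    intro i hi hij hd
    have : i = j - 1 := by omega
    subst this
    rw [ascProd_single]
  | succ m ih =>
    intro i hi hij hd
    have hcons : ascProd g i (j-1) = g i * ascProd g (i+1) (j-1) := ascProd_cons g (by omega)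
    have hih := ih (i+1) (by omega) (by omega) (by omega)
    calc ascProd g i (j-1) * g j * (ascProd g i (j-1))⁻¹
        = g i * (ascProd g (i+1) (j-1) * g j * (ascProd g (i+1) (j-1))⁻¹) * (g i)⁻¹ := by
          rw [hcons]; group
      _ = g i * (g (j-1) * g j * (g (j-1))⁻¹) * (g i)⁻¹ := by rw [hih]
      _ = g (j-1) * g j * (g (j-1))⁻¹ := by
          rw [U_comm hg (by omega) (by omega) hjn]; group

/-- B2 : EB-families give braid families. -/
theorem ggF_isBraidFam (hg : IsEBFam g n) : IsBraidFam (ggF g) n := by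
  constructor
  · intro i hi hin
    have hbraid : g i * g (i+1) * g i = g (i+1) * g i * g (i+1) :=
      (adj_braid hg (l := i+1) (by omega) (by omega)).symm
    have hdec : ascProd g 1 i = ascProd g 1 (i-1) * g i := by
      have := ascProd_concat g (a := 1) (b := i-1) (by omega)
      rw [show i - 1 + 1 = i by omega] at this
      exact this
    have core := adj_core (a := g i) (b := g (i+1)) hbraid
    show ggF g i * ggF g (i+1) * ggF g i = ggF g (i+1) * ggF g i * ggF g (i+1)
    unfold ggF
    rw [show i + 1 - 1 = i by omega, hdec]
    calc (ascProd g 1 (i-1) * (g i)⁻¹ * (ascProd g 1 (i-1))⁻¹) *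
          ((ascProd g 1 (i-1) * g i) * (g (i+1))⁻¹ * (ascProd g 1 (i-1) * g i)⁻¹) *
          (ascProd g 1 (i-1) * (g i)⁻¹ * (ascProd g 1 (i-1))⁻¹)
        = ascProd g 1 (i-1) *
            ((g i)⁻¹ * (g i * (g (i+1))⁻¹ * (g i)⁻¹) * (g i)⁻¹) * (ascProd g 1 (i-1))⁻¹ := by
          group
      _ = ascProd g 1 (i-1) *
            ((g i * (g (i+1))⁻¹ * (g i)⁻¹) * (g i)⁻¹ * (g i * (g (i+1))⁻¹ * (g i)⁻¹)) *
            (ascProd g 1 (i-1))⁻¹ := by rw [core]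
      _ = ((ascProd g 1 (i-1) * g i) * (g (i+1))⁻¹ * (ascProd g 1 (i-1) * g i)⁻¹) *
          (ascProd g 1 (i-1) * (g i)⁻¹ * (ascProd g 1 (i-1))⁻¹) *
          ((ascProd g 1 (i-1) * g i) * (g (i+1))⁻¹ * (ascProd g 1 (i-1) * g i)⁻¹) := by
          group
  · intro i j hi hij hjn
    have hsplit : ascProd g 1 (j-1) = ascProd g 1 (i-1) * ascProd g i (j-1) := by
      have := ascProd_split g (a := 1) (c := i-1) (b := j-1) (by omega) (by omega)
      rw [show i - 1 + 1 = i by omega] at this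
      exact this
    have hW := W_conj hg (j := j) (by omega) hjn (j - 1 - i) i hi (by omega) rfl
    have hU := U_comm hg (i := i) (j := j) hi hij hjn
    -- core commutation : g i ⁻¹ commutes with Q * g j ⁻¹ * Q⁻¹ where Q = ascProd g i (j-1)
    have hcore : (g i)⁻¹ * (ascProd g i (j-1) * (g j)⁻¹ * (ascProd g i (j-1))⁻¹) =
        (ascProd g i (j-1) * (g j)⁻¹ * (ascProd g i (j-1))⁻¹) * (g i)⁻¹ := by
      have c1 : Commute (g i) (ascProd g i (j-1) * g j * (ascProd g i (j-1))⁻¹) := by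
        rw [hW]; exact hU
      have c2 : Commute (g i)⁻¹ (ascProd g i (j-1) * (g j)⁻¹ * (ascProd g i (j-1))⁻¹) := by
        have c3 : (ascProd g i (j-1) * (g j)⁻¹ * (ascProd g i (j-1))⁻¹) =
            (ascProd g i (j-1) * g j * (ascProd g i (j-1))⁻¹)⁻¹ := by group
        rw [c3]
        exact c1.inv_left.inv_right
      exact c2.eq
    show ggF g i * ggF g j = ggF g j * ggF g i
    unfold ggF
    rw [hsplit]
    calc (ascProd g 1 (i-1) * (g i)⁻¹ * (ascProd g 1 (i-1))⁻¹) *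
          ((ascProd g 1 (i-1) * ascProd g i (j-1)) * (g j)⁻¹ *
            (ascProd g 1 (i-1) * ascProd g i (j-1))⁻¹)
        = ascProd g 1 (i-1) *
            ((g i)⁻¹ * (ascProd g i (j-1) * (g j)⁻¹ * (ascProd g i (j-1))⁻¹)) *
            (ascProd g 1 (i-1))⁻¹ := by group
      _ = ascProd g 1 (i-1) *
            ((ascProd g i (j-1) * (g j)⁻¹ * (ascProd g i (j-1))⁻¹) * (g i)⁻¹) *
            (ascProd g 1 (i-1))⁻¹ := by rw [hcore]
      _ = ((ascProd g 1 (i-1) * ascProd g i (j-1)) * (g j)⁻¹ *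
            (ascProd g 1 (i-1) * ascProd g i (j-1))⁻¹) *
          (ascProd g 1 (i-1) * (g i)⁻¹ * (ascProd g 1 (i-1))⁻¹) := by group

end IsEBFamLemmas

end BraidWork

namespace BraidWork

/-- Generator index type for the `n`-strand braid group. -/
abbrev Gen (n : ℕ) := {k : ℕ // 1 ≤ k ∧ k < n}

/-- The Artin relations for the braid group on `n` strands. -/
def artinRels (n : ℕ) : Set (FreeGroup (Gen n)) :=
  {r | ∃ i j : Gen n,
    ((j : ℕ) = (i : ℕ) + 1 ∧
      r = FreeGroup.of i * FreeGroup.of j * FreeGroup.of i *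
          (FreeGroup.of j * FreeGroup.of i * FreeGroup.of j)⁻¹) ∨
    ((i : ℕ) + 1 < (j : ℕ) ∧
      r = FreeGroup.of i * FreeGroup.of j * (FreeGroup.of j * FreeGroup.of i)⁻¹)}

/-- The braid group on `n` strands, as a presented group. -/
abbrev A (n : ℕ) : Type := PresentedGroup (artinRels n)

theorem A_rel1 {n : ℕ} {i j : Gen n} (h : (j : ℕ) = (i : ℕ) + 1) :
    (PresentedGroup.of i : A n) * .of j * .of i = .of j * .of i * .of j := by
  have h1 : (FreeGroup.of i * FreeGroup.of j * FreeGroup.of i *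
      (FreeGroup.of j * FreeGroup.of i * FreeGroup.of j)⁻¹) ∈ artinRels n :=
    ⟨i, j, Or.inl ⟨h, rfl⟩⟩
  have h2 : (PresentedGroup.mk (artinRels n)) (FreeGroup.of i * FreeGroup.of j * FreeGroup.of i *
      (FreeGroup.of j * FreeGroup.of i * FreeGroup.of j)⁻¹) = 1 :=
    (QuotientGroup.eq_one_iff _).mpr (Subgroup.subset_normalClosure h1)
  simp only [map_mul, map_inv] at h2
  exact mul_inv_eq_one.mp h2

theorem A_rel2 {n : ℕ} {i j : Gen n} (h : (i : ℕ) + 1 < (j : ℕ)) :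
    (PresentedGroup.of i : A n) * .of j = .of j * .of i := by
  have h1 : (FreeGroup.of i * FreeGroup.of j * (FreeGroup.of j * FreeGroup.of i)⁻¹)
      ∈ artinRels n := ⟨i, j, Or.inr ⟨h, rfl⟩⟩
  have h2 : (PresentedGroup.mk (artinRels n)) (FreeGroup.of i * FreeGroup.of j *
      (FreeGroup.of j * FreeGroup.of i)⁻¹) = 1 :=
    (QuotientGroup.eq_one_iff _).mpr (Subgroup.subset_normalClosure h1)
  simp only [map_mul, map_inv] at h2
  exact mul_inv_eq_one.mp h2

/-- The Artin generators of `A n` (with junk value `1` out of range). -/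
def sg (n : ℕ) (i : ℕ) : A n :=
  if h : 1 ≤ i ∧ i < n then PresentedGroup.of ⟨i, h⟩ else 1

theorem sg_of (n : ℕ) {i : ℕ} (h : 1 ≤ i ∧ i < n) : sg n i = PresentedGroup.of ⟨i, h⟩ :=
  dif_pos h

theorem sgFam (n : ℕ) : IsBraidFam (sg n) n := by
  constructor
  · intro i h1 h2
    rw [sg_of n (i := i) ⟨h1, by omega⟩, sg_of n (i := i+1) ⟨by omega, by omega⟩]
    exact A_rel1 rfl
  · intro i j h1 h2 h3
    rw [sg_of n (i := i) ⟨h1, by omega⟩, sg_of n (i := j) ⟨by omega, h3⟩]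
    exact A_rel2 (by simp; omega)

/-- Auxiliary: a map from generator indices satisfying relations extends to `A n`. -/
theorem artin_lift_rels {n : ℕ} {G : Type*} [Group G] {f : ℕ → G} (hf : IsBraidFam f n) :
    ∀ r ∈ artinRels n, FreeGroup.lift (fun g : Gen n => f g.1) r = 1 := by
  rintro r ⟨i, j, ⟨h, rfl⟩ | ⟨h, rfl⟩⟩
  · simp only [map_mul, map_inv, FreeGroup.lift_apply_of]
    rw [mul_inv_eq_one]
    have := hf.adj i.1 i.2.1 (by have := j.2.2; omega)
    rw [show i.1 + 1 = (j:ℕ) by omega] at this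
    exact this
  · simp only [map_mul, map_inv, FreeGroup.lift_apply_of]
    rw [mul_inv_eq_one]
    exact hf.comm i.1 j.1 i.2.1 (by omega) j.2.2

/-- The homomorphism `A n →* G` induced by a braid family. -/
def artinHom {n : ℕ} {G : Type*} [Group G] {f : ℕ → G} (hf : IsBraidFam f n) :
    A n →* G :=
  PresentedGroup.toGroup (artin_lift_rels hf)

@[simp]
theorem artinHom_of {n : ℕ} {G : Type*} [Group G] {f : ℕ → G} (hf : IsBraidFam f n)
    (g : Gen n) : artinHom hf (.of g) = f g.1 :=
  PresentedGroup.toGroup.of _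

theorem artinHom_sg {n : ℕ} {G : Type*} [Group G] {f : ℕ → G} (hf : IsBraidFam f n)
    (i : ℕ) (h : 1 ≤ i ∧ i < n) : artinHom hf (sg n i) = f i := by
  rw [sg_of n h, artinHom_of]

/-- The canonical map `A m →* A (m+1)`. -/
def theta (m : ℕ) : A m →* A (m + 1) :=
  artinHom (f := sg (m+1)) (IsBraidFam.mk
    (fun i h1 h2 => (sgFam (m+1)).adj i h1 (by omega))
    (fun i j h1 h2 h3 => (sgFam (m+1)).comm i j h1 h2 (by omega)))

theorem theta_of (m : ℕ) (g : Gen m) :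
    theta m (.of g) = .of (⟨g.1, ⟨g.2.1, by have := g.2.2; omega⟩⟩ : Gen (m+1)) := by
  unfold theta
  rw [artinHom_of, sg_of (m+1) ⟨g.2.1, by have := g.2.2; omega⟩]

theorem theta_sg (m : ℕ) (i : ℕ) (h : 1 ≤ i ∧ i < m) : theta m (sg m i) = sg (m+1) i := by
  rw [sg_of m h, theta_of, sg_of (m+1) ⟨h.1, by omega⟩]

end BraidWork

namespace BraidWork

/-- Artin-type automorphism data on the free group `F = FreeGroup ℕ`. -/
def am (k : ℕ) : FreeGroup ℕ →* FreeGroup ℕ :=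
  FreeGroup.lift (fun t =>
    if t = k then (FreeGroup.of k)⁻¹ * FreeGroup.of (k+1) * FreeGroup.of k
    else if t = k + 1 then FreeGroup.of k
    else FreeGroup.of t)

def amInv (k : ℕ) : FreeGroup ℕ →* FreeGroup ℕ :=
  FreeGroup.lift (fun t =>
    if t = k then FreeGroup.of (k+1)
    else if t = k + 1 then FreeGroup.of (k+1) * FreeGroup.of k * (FreeGroup.of (k+1))⁻¹
    else FreeGroup.of t)

theorem am_of_self (k : ℕ) :
    am k (.of k) = (FreeGroup.of k)⁻¹ * FreeGroup.of (k+1) * FreeGroup.of k := by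
  rw [am, FreeGroup.lift_apply_of, if_pos rfl]

theorem am_of_succ (k : ℕ) : am k (.of (k+1)) = FreeGroup.of k := by
  rw [am, FreeGroup.lift_apply_of, if_neg (by omega : k + 1 ≠ k), if_pos rfl]

theorem am_of_other (k t : ℕ) (h1 : t ≠ k) (h2 : t ≠ k + 1) :
    am k (.of t) = FreeGroup.of t := by
  rw [am, FreeGroup.lift_apply_of, if_neg h1, if_neg h2]

theorem amInv_of_self (k : ℕ) : amInv k (.of k) = FreeGroup.of (k+1) := by
  rw [amInv, FreeGroup.lift_apply_of, if_pos rfl]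

theorem amInv_of_succ (k : ℕ) :
    amInv k (.of (k+1)) = FreeGroup.of (k+1) * FreeGroup.of k * (FreeGroup.of (k+1))⁻¹ := by
  rw [amInv, FreeGroup.lift_apply_of, if_neg (by omega : k + 1 ≠ k), if_pos rfl]

theorem amInv_of_other (k t : ℕ) (h1 : t ≠ k) (h2 : t ≠ k + 1) :
    amInv k (.of t) = FreeGroup.of t := by
  rw [amInv, FreeGroup.lift_apply_of, if_neg h1, if_neg h2]

theorem am_amInv (k : ℕ) : (am k).comp (amInv k) = MonoidHom.id _ := by
  apply FreeGroup.ext_hom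
  intro t
  simp only [MonoidHom.comp_apply, MonoidHom.id_apply]
  by_cases h1 : t = k
  · subst h1
    rw [amInv_of_self, am_of_succ]
  · by_cases h2 : t = k + 1
    · subst h2
      rw [amInv_of_succ]
      simp only [map_mul, map_inv, am_of_succ, am_of_self]
      group
    · rw [amInv_of_other k t h1 h2, am_of_other k t h1 h2]

theorem amInv_am (k : ℕ) : (amInv k).comp (am k) = MonoidHom.id _ := by
  apply FreeGroup.ext_hom
  intro t
  simp only [MonoidHom.comp_apply, MonoidHom.id_apply]
  by_cases h1 : t = k
  · subst h1
    rw [am_of_self]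
    simp only [map_mul, map_inv, amInv_of_self, amInv_of_succ]
    group
  · by_cases h2 : t = k + 1
    · subst h2
      rw [am_of_succ, amInv_of_self]
    · rw [am_of_other k t h1 h2, amInv_of_other k t h1 h2]

theorem amInv_am_apply (k : ℕ) (f : FreeGroup ℕ) : amInv k (am k f) = f :=
  DFunLike.congr_fun (amInv_am k) f

theorem am_amInv_apply (k : ℕ) (f : FreeGroup ℕ) : am k (amInv k f) = f :=
  DFunLike.congr_fun (am_amInv k) f

/-- Braid relation for the `am`'s. -/
theorem am_braid (k : ℕ) :
    (am k).comp ((am (k+1)).comp (am k)) = (am (k+1)).comp ((am k).comp (am (k+1))) := by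
  have e1 : am (k+1) (.of k) = FreeGroup.of k := am_of_other (k+1) k (by omega) (by omega)
  have e2 : am k (.of (k+2)) = FreeGroup.of (k+2) := am_of_other k (k+2) (by omega) (by omega)
  have e3 : am (k+1) (.of (k+2)) = FreeGroup.of (k+1) := by
    have := am_of_succ (k+1); rwa [show k + 1 + 1 = k + 2 by omega] at this
  have e4 : am (k+1) (.of (k+1)) =
      (FreeGroup.of (k+1))⁻¹ * FreeGroup.of (k+2) * FreeGroup.of (k+1) := by
    have := am_of_self (k+1); rwa [show k + 1 + 1 = k + 2 by omega] at this
  apply FreeGroup.ext_hom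
  intro t
  simp only [MonoidHom.comp_apply]
  by_cases h1 : t = k
  · subst h1
    simp only [map_mul, map_inv, am_of_self, am_of_succ, e1, e2, e3, e4]
    group
  · by_cases h2 : t = k + 1
    · subst h2
      simp only [map_mul, map_inv, am_of_self, am_of_succ, e1, e2, e3, e4]
    · by_cases h3 : t = k + 2
      · subst h3
        simp only [map_mul, map_inv, am_of_self, am_of_succ, e1, e2, e3, e4]
      · have f1 : am k (.of t) = FreeGroup.of t := am_of_other k t h1 h2
        have f2 : am (k+1) (.of t) = FreeGroup.of t := am_of_other (k+1) t h2 (by omega)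
        simp only [f1, f2]

/-- Commutation for distant `am`'s. -/
theorem am_comm (a b : ℕ) (h : a + 2 ≤ b) :
    (am a).comp (am b) = (am b).comp (am a) := by
  have e1 : am b (.of a) = FreeGroup.of a := am_of_other b a (by omega) (by omega)
  have e2 : am b (.of (a+1)) = FreeGroup.of (a+1) := am_of_other b (a+1) (by omega) (by omega)
  have e3 : am a (.of b) = FreeGroup.of b := am_of_other a b (by omega) (by omega)
  have e4 : am a (.of (b+1)) = FreeGroup.of (b+1) := am_of_other a (b+1) (by omega) (by omega)
  apply FreeGroup.ext_hom
  intro t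
  simp only [MonoidHom.comp_apply]
  by_cases h1 : t = a
  · subst h1
    simp only [map_mul, map_inv, am_of_self, e1, e2]
  · by_cases h2 : t = a + 1
    · subst h2
      simp only [am_of_succ, e1, e2]
    · by_cases h3 : t = b
      · subst h3
        simp only [map_mul, map_inv, am_of_self, e3, e4]
      · by_cases h4 : t = b + 1
        · subst h4
          simp only [am_of_succ, e3, e4]
        · have f1 : am a (.of t) = FreeGroup.of t := am_of_other a t h1 h2
          have f2 : am b (.of t) = FreeGroup.of t := am_of_other b t h3 h4
          simp only [f1, f2]

theorem am_braid_apply (k : ℕ) (f : FreeGroup ℕ) :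
    am k (am (k+1) (am k f)) = am (k+1) (am k (am (k+1) f)) :=
  DFunLike.congr_fun (am_braid k) f

theorem am_comm_apply {a b : ℕ} (h : a + 2 ≤ b) (f : FreeGroup ℕ) :
    am a (am b f) = am b (am a f) :=
  DFunLike.congr_fun (am_comm a b h) f

end BraidWork

namespace BraidWork

/-- The combing set for the inclusion `A m ↪ A (m+1)`. -/
abbrev S (m : ℕ) : Type := A m × FreeGroup ℕ × ℕ

/-- The index of the `A m`-generator occurring in the coset rewriting. -/
def bz (i j : ℕ) : ℕ := if j < i then i - 1 else i

/-- Action of the generator `σ_i` of `A (m+1)` on the combing set. -/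
def Rfun (m i : ℕ) : S m → S m := fun p =>
  if p.2.2 = i then (p.1, FreeGroup.of i * p.2.1, i + 1)
  else if p.2.2 = i + 1 then (p.1, p.2.1, i)
  else if 1 ≤ p.2.2 ∧ p.2.2 ≤ m + 1 then
    (sg m (bz i p.2.2) * p.1, am (bz i p.2.2) p.2.1, p.2.2)
  else p

def RfunInv (m i : ℕ) : S m → S m := fun p =>
  if p.2.2 = i then (p.1, p.2.1, i + 1)
  else if p.2.2 = i + 1 then (p.1, (FreeGroup.of i)⁻¹ * p.2.1, i)
  else if 1 ≤ p.2.2 ∧ p.2.2 ≤ m + 1 then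
    ((sg m (bz i p.2.2))⁻¹ * p.1, amInv (bz i p.2.2) p.2.1, p.2.2)
  else p

theorem Rfun_at (m i : ℕ) (b : A m) (f : FreeGroup ℕ) :
    Rfun m i (b, f, i) = (b, FreeGroup.of i * f, i + 1) := by
  simp [Rfun]

theorem Rfun_succ (m i : ℕ) (b : A m) (f : FreeGroup ℕ) :
    Rfun m i (b, f, i + 1) = (b, f, i) := by
  simp [Rfun]

theorem Rfun_other (m i j : ℕ) (b : A m) (f : FreeGroup ℕ)
    (h1 : j ≠ i) (h2 : j ≠ i + 1) (h3 : 1 ≤ j ∧ j ≤ m + 1) :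
    Rfun m i (b, f, j) = (sg m (bz i j) * b, am (bz i j) f, j) := by
  simp only [Rfun, if_neg h1, if_neg h2, if_pos h3]

theorem Rfun_junk (m i j : ℕ) (b : A m) (f : FreeGroup ℕ)
    (h1 : j ≠ i) (h2 : j ≠ i + 1) (h3 : ¬(1 ≤ j ∧ j ≤ m + 1)) :
    Rfun m i (b, f, j) = (b, f, j) := by
  simp only [Rfun, if_neg h1, if_neg h2, if_neg h3]

theorem RfunInv_at (m i : ℕ) (b : A m) (f : FreeGroup ℕ) :
    RfunInv m i (b, f, i) = (b, f, i + 1) := by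
  simp [RfunInv]

theorem RfunInv_succ (m i : ℕ) (b : A m) (f : FreeGroup ℕ) :
    RfunInv m i (b, f, i + 1) = (b, (FreeGroup.of i)⁻¹ * f, i) := by
  simp [RfunInv]

theorem RfunInv_other (m i j : ℕ) (b : A m) (f : FreeGroup ℕ)
    (h1 : j ≠ i) (h2 : j ≠ i + 1) (h3 : 1 ≤ j ∧ j ≤ m + 1) :
    RfunInv m i (b, f, j) = ((sg m (bz i j))⁻¹ * b, amInv (bz i j) f, j) := by
  simp only [RfunInv, if_neg h1, if_neg h2, if_pos h3]

theorem RfunInv_junk (m i j : ℕ) (b : A m) (f : FreeGroup ℕ)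
    (h1 : j ≠ i) (h2 : j ≠ i + 1) (h3 : ¬(1 ≤ j ∧ j ≤ m + 1)) :
    RfunInv m i (b, f, j) = (b, f, j) := by
  simp only [RfunInv, if_neg h1, if_neg h2, if_neg h3]

theorem RfunInv_Rfun (m i : ℕ) : Function.LeftInverse (RfunInv m i) (Rfun m i) := by
  rintro ⟨b, f, j⟩
  by_cases h1 : j = i
  · subst h1
    rw [Rfun_at, RfunInv_succ]
    simp [← mul_assoc]
  · by_cases h2 : j = i + 1
    · subst h2
      rw [Rfun_succ, RfunInv_at]
    · by_cases h3 : 1 ≤ j ∧ j ≤ m + 1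
      · rw [Rfun_other m i j b f h1 h2 h3, RfunInv_other m i j _ _ h1 h2 h3,
          amInv_am_apply]
        simp [← mul_assoc]
      · rw [Rfun_junk m i j b f h1 h2 h3, RfunInv_junk m i j b f h1 h2 h3]

theorem Rfun_RfunInv (m i : ℕ) : Function.RightInverse (RfunInv m i) (Rfun m i) := by
  rintro ⟨b, f, j⟩
  by_cases h1 : j = i
  · subst h1
    rw [RfunInv_at, Rfun_succ]
  · by_cases h2 : j = i + 1
    · subst h2
      rw [RfunInv_succ, Rfun_at]
      simp [← mul_assoc]
    · by_cases h3 : 1 ≤ j ∧ j ≤ m + 1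
      · rw [RfunInv_other m i j b f h1 h2 h3, Rfun_other m i j _ _ h1 h2 h3,
          am_amInv_apply]
        simp [← mul_assoc]
      · rw [RfunInv_junk m i j b f h1 h2 h3, Rfun_junk m i j b f h1 h2 h3]

/-- The permutation of the combing set given by the generator `σ_i` of `A (m+1)`. -/
def Rperm (m i : ℕ) : Equiv.Perm (S m) :=
  ⟨Rfun m i, RfunInv m i, RfunInv_Rfun m i, Rfun_RfunInv m i⟩

theorem Rperm_apply (m i : ℕ) (p : S m) : Rperm m i p = Rfun m i p := rfl

end BraidWork

namespace BraidWork

theorem bz_lt {i j : ℕ} (h : j < i) : bz i j = i - 1 := if_pos h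
theorem bz_ge {i j : ℕ} (h : ¬ j < i) : bz i j = i := if_neg h

/-- Evaluation of `Rfun` on an in-range coset `j ∉ {i, i+1}`, with `bz` computed. -/
theorem Rfun_lt (m i j : ℕ) (h1 : 1 ≤ j) (h2 : j < i) (h3 : j ≤ m + 1) :
    ∀ (b : A m) (f : FreeGroup ℕ),
      Rfun m i (b, f, j) = (sg m (i-1) * b, am (i-1) f, j) := by
  intro b f
  rw [Rfun_other m i j b f (by omega) (by omega) ⟨h1, h3⟩, bz_lt h2]

theorem Rfun_gt (m i j : ℕ) (h1 : 1 ≤ j) (h2 : i + 1 < j) (h3 : j ≤ m + 1) :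
    ∀ (b : A m) (f : FreeGroup ℕ),
      Rfun m i (b, f, j) = (sg m i * b, am i f, j) := by
  intro b f
  rw [Rfun_other m i j b f (by omega) (by omega) ⟨h1, h3⟩, bz_ge (by omega)]

theorem Rfun_at' (m i : ℕ) : ∀ (b : A m) (f : FreeGroup ℕ),
    Rfun m i (b, f, i) = (b, FreeGroup.of i * f, i + 1) := fun b f => Rfun_at m i b f

theorem Rfun_succ' (m i : ℕ) : ∀ (b : A m) (f : FreeGroup ℕ),
    Rfun m i (b, f, i + 1) = (b, f, i) := fun b f => Rfun_succ m i b f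

theorem Rfun_junk' (m i j : ℕ) (h1 : j ≠ i) (h2 : j ≠ i + 1) (h3 : ¬(1 ≤ j ∧ j ≤ m + 1)) :
    ∀ (b : A m) (f : FreeGroup ℕ), Rfun m i (b, f, j) = (b, f, j) :=
  fun b f => Rfun_junk m i j b f h1 h2 h3

theorem R_braid (m i : ℕ) (hi : 1 ≤ i) (h2 : i + 2 ≤ m + 1) :
    Rperm m i * Rperm m (i+1) * Rperm m i = Rperm m (i+1) * Rperm m i * Rperm m (i+1) := by
  apply Equiv.ext
  rintro ⟨b, f, p⟩
  simp only [Equiv.Perm.mul_apply, Rperm_apply]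
  have ei1lt : ∀ (b : A m) (f : FreeGroup ℕ),
      Rfun m (i+1) (b, f, i) = (sg m i * b, am i f, i) := by
    have := Rfun_lt m (i+1) i (by omega) (by omega) (by omega)
    simpa using this
  by_cases hA : p = i
  · rw [hA]
    rw [Rfun_at', Rfun_at', Rfun_gt m i (i+2) (by omega) (by omega) (by omega),
      ei1lt, Rfun_at', Rfun_at']
    simp only [Prod.mk.injEq, map_mul, am_of_succ, am_of_self, eq_self_iff_true,
      true_and, and_true]
    group
  · by_cases hB : p = i + 1
    · rw [hB]
      rw [Rfun_succ', ei1lt, Rfun_at', Rfun_at',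
        Rfun_gt m i (i+2) (by omega) (by omega) (by omega),
        show i + 1 + 1 = i + 2 by omega, Rfun_succ']
      simp only [Prod.mk.injEq, map_mul, am_of_succ, eq_self_iff_true, true_and, and_true]
    · by_cases hC : p = i + 2
      · rw [hC]
        rw [Rfun_gt m i (i+2) (by omega) (by omega) (by omega),
          show i + 2 = (i + 1) + 1 by omega, Rfun_succ', Rfun_succ', Rfun_succ',
          Rfun_succ', ei1lt]
      · by_cases hD : 1 ≤ p ∧ p ≤ m + 1
        · rcases Nat.lt_or_ge p i with hpi | hpi
          · -- p < i, so i ≥ 2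
            have e1 := Rfun_lt m i p (by omega) (by omega) (by omega)
            have e2 : ∀ (b : A m) (f : FreeGroup ℕ),
                Rfun m (i+1) (b, f, p) = (sg m i * b, am i f, p) := by
              have := Rfun_lt m (i+1) p (by omega) (by omega) (by omega)
              simpa using this
            rw [e1, e2, e1, e2, e1, e2]
            simp only [Prod.mk.injEq, eq_self_iff_true, and_true]
            have hadj := (sgFam m).adj (i-1) (by omega) (by omega)
            rw [show i - 1 + 1 = i by omega] at hadj
            have hamb := am_braid_apply (i-1) f
            rw [show i - 1 + 1 = i by omega] at hamb
            refine ⟨?_, hamb⟩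
            simp only [← mul_assoc]
            rw [hadj]
          · -- p ≥ i + 3
            have hp3 : i + 3 ≤ p := by omega
            have e1 := Rfun_gt m i p (by omega) (by omega) (by omega)
            have e2 := Rfun_gt m (i+1) p (by omega) (by omega) (by omega)
            rw [e1, e2, e1, e2, e1, e2]
            simp only [Prod.mk.injEq, eq_self_iff_true, and_true]
            have hadj := (sgFam m).adj i hi (by omega)
            refine ⟨?_, am_braid_apply i f⟩
            simp only [← mul_assoc]
            rw [hadj]
        · have e1 := Rfun_junk' m i p (by omega) (by omega) hD
          have e2 := Rfun_junk' m (i+1) p (by omega) (by omega) hD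
          simp only [e1, e2]

theorem R_comm (m i j : ℕ) (hi : 1 ≤ i) (hij : i + 2 ≤ j) (hj : j ≤ m) :
    Rperm m i * Rperm m j = Rperm m j * Rperm m i := by
  apply Equiv.ext
  rintro ⟨b, f, p⟩
  simp only [Equiv.Perm.mul_apply, Rperm_apply]
  by_cases hA : p = i
  · rw [hA]
    rw [Rfun_lt m j i (by omega) (by omega) (by omega), Rfun_at', Rfun_at',
      Rfun_lt m j (i+1) (by omega) (by omega) (by omega)]
    simp only [Prod.mk.injEq, map_mul, eq_self_iff_true, true_and, and_true]
    rw [am_of_other (j-1) i (by omega) (by omega)]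
  · by_cases hB : p = i + 1
    · rw [hB]
      rw [Rfun_lt m j (i+1) (by omega) (by omega) (by omega), Rfun_succ', Rfun_succ',
        Rfun_lt m j i (by omega) (by omega) (by omega)]
    · by_cases hC : p = j
      · rw [hC]
        rw [Rfun_at', Rfun_gt m i (j+1) (by omega) (by omega) (by omega),
          Rfun_gt m i j (by omega) (by omega) (by omega), Rfun_at']
        simp only [Prod.mk.injEq, map_mul, eq_self_iff_true, true_and, and_true]
        rw [am_of_other i j (by omega) (by omega)]
      · by_cases hD : p = j + 1
        · rw [hD]
          rw [Rfun_succ', Rfun_gt m i j (by omega) (by omega) (by omega),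
            Rfun_gt m i (j+1) (by omega) (by omega) (by omega), Rfun_succ']
        · by_cases hE : 1 ≤ p ∧ p ≤ m + 1
          · rcases Nat.lt_or_ge p i with hpi | hpi
            · -- p < i
              have e1 := Rfun_lt m i p (by omega) (by omega) (by omega)
              have e2 := Rfun_lt m j p (by omega) (by omega) (by omega)
              rw [e2, e1, e1, e2]
              simp only [Prod.mk.injEq, eq_self_iff_true, and_true]
              constructor
              · simp only [← mul_assoc]
                rw [(sgFam m).comm (i-1) (j-1) (by omega) (by omega) (by omega)]
              · exact am_comm_apply (a := i-1) (b := j-1) (by omega) f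
            · rcases Nat.lt_or_ge p j with hpj | hpj
              · -- i + 2 ≤ p ≤ j - 1
                have e1 := Rfun_gt m i p (by omega) (by omega) (by omega)
                have e2 := Rfun_lt m j p (by omega) (by omega) (by omega)
                rw [e2, e1, e1, e2]
                simp only [Prod.mk.injEq, eq_self_iff_true, and_true]
                constructor
                · simp only [← mul_assoc]
                  rw [(sgFam m).comm i (j-1) (by omega) (by omega) (by omega)]
                · exact am_comm_apply (a := i) (b := j-1) (by omega) f
              · -- p ≥ j + 2
                have e1 := Rfun_gt m i p (by omega) (by omega) (by omega)
                have e2 := Rfun_gt m j p (by omega) (by omega) (by omega)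
                rw [e2, e1, e1, e2]
                simp only [Prod.mk.injEq, eq_self_iff_true, and_true]
                constructor
                · simp only [← mul_assoc]
                  rw [(sgFam m).comm i j (by omega) (by omega) (by omega)]
                · exact am_comm_apply (a := i) (b := j) (by omega) f
          · have e1 := Rfun_junk' m i p (by omega) (by omega) hE
            have e2 := Rfun_junk' m j p (by omega) (by omega) hE
            simp only [e1, e2]

end BraidWork

namespace BraidWork

theorem Rperm_rels (m : ℕ) : ∀ r ∈ artinRels (m+1),
    FreeGroup.lift (fun g : Gen (m+1) => Rperm m g.1) r = 1 := by
  rintro r ⟨i, j, ⟨h, rfl⟩ | ⟨h, rfl⟩⟩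
  · simp only [map_mul, map_inv, FreeGroup.lift_apply_of]
    rw [mul_inv_eq_one]
    have hb := R_braid m i.1 i.2.1 (by have := j.2.2; omega)
    rw [show i.1 + 1 = (j:ℕ) by omega] at hb
    exact hb
  · simp only [map_mul, map_inv, FreeGroup.lift_apply_of]
    rw [mul_inv_eq_one]
    exact R_comm m i.1 j.1 i.2.1 (by omega) (by have := j.2.2; omega)

/-- The combing action of `A (m+1)` on `S m`. -/
def Phi (m : ℕ) : A (m+1) →* Equiv.Perm (S m) :=
  PresentedGroup.toGroup (Rperm_rels m)

theorem Phi_of (m : ℕ) (g : Gen (m+1)) : Phi m (.of g) = Rperm m g.1 :=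
  PresentedGroup.toGroup.of _

/-- Combing: every element of the image of `A m` acts on the base slice in a controlled way. -/
theorem Phi_theta (m : ℕ) (u : A m) :
    ∃ E : FreeGroup ℕ ≃ FreeGroup ℕ, ∀ (b : A m) (f : FreeGroup ℕ),
      Phi m (theta m u) (b, f, m + 1) = (u * b, E f, m + 1) := by
  set K : Subgroup (A m) :=
    { carrier := {u | ∃ E : FreeGroup ℕ ≃ FreeGroup ℕ, ∀ (b : A m) (f : FreeGroup ℕ),
        Phi m (theta m u) (b, f, m + 1) = (u * b, E f, m + 1)}
      one_mem' := by
        refine ⟨Equiv.refl _, fun b f => ?_⟩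
        simp
      mul_mem' := by
        rintro u v ⟨E1, h1⟩ ⟨E2, h2⟩
        refine ⟨E2.trans E1, fun b f => ?_⟩
        rw [map_mul, map_mul]
        simp only [Equiv.Perm.mul_apply]
        rw [h2, h1]
        simp [mul_assoc]
      inv_mem' := by
        rintro u ⟨E, h⟩
        refine ⟨E.symm, fun b f => ?_⟩
        rw [map_inv, map_inv]
        rw [Equiv.Perm.inv_def, Equiv.symm_apply_eq, h]
        simp } with hK
  have : ∀ u, u ∈ K := by
    apply PresentedGroup.generated_by
    intro g
    refine ⟨⟨am g.1, amInv g.1, amInv_am_apply g.1, am_amInv_apply g.1⟩, fun b f => ?_⟩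
    rw [theta_of, Phi_of]
    have hg2 := g.2.2
    rw [Rperm_apply]
    rw [Rfun_gt m g.1 (m+1) (by omega) (by omega) (by omega)]
    rw [sg_of m g.2]
    rfl
  exact this u

theorem theta_injective (m : ℕ) : Function.Injective (theta m) := by
  rw [injective_iff_map_eq_one]
  intro u hu
  obtain ⟨E, hE⟩ := Phi_theta m u
  have := hE 1 1
  rw [hu] at this
  simp only [map_one, Equiv.Perm.one_apply] at this
  have h1 := congrArg (fun p => p.1) this
  simpa using h1.symm

end BraidWork
namespace BraidWork

theorem sgFam_le {n m : ℕ} (h : n ≤ m) : IsBraidFam (sg m) n :=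
  ⟨fun i h1 h2 => (sgFam m).adj i h1 (by omega),
   fun i j h1 h2 h3 => (sgFam m).comm i j h1 h2 (by omega)⟩

/-- The canonical map `A n →* A m` for `n ≤ m`. -/
def thetaLE {n m : ℕ} (h : n ≤ m) : A n →* A m := artinHom (sgFam_le h)

theorem thetaLE_of {n m : ℕ} (h : n ≤ m) (g : Gen n) :
    thetaLE h (.of g) = sg m g.1 := artinHom_of _ g

theorem thetaLE_injective {n m : ℕ} (h : n ≤ m) : Function.Injective (thetaLE h) := by
  induction m, h using Nat.le_induction with
  | base =>
    have : ∀ x, thetaLE (le_refl n) x = x := by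
      intro x
      have hid : thetaLE (le_refl n) = MonoidHom.id (A n) := by
        apply PresentedGroup.ext
        intro g
        rw [thetaLE_of, sg_of n g.2]
        rfl
      rw [hid, MonoidHom.id_apply]
    intro a b hab
    rw [← this a, ← this b, hab]
  | succ m hm ih =>
    have h2 : thetaLE (by omega : n ≤ m + 1) = (theta m).comp (thetaLE hm) := by
      apply PresentedGroup.ext
      intro g
      rw [thetaLE_of, MonoidHom.comp_apply, thetaLE_of,
        theta_sg m g.1 ⟨g.2.1, by have := g.2.2; omega⟩]
    intro a b hab
    rw [h2] at hab
    simp only [MonoidHom.comp_apply] at hab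
    exact ih (theta_injective m hab)

/-- Braid family `sig` in `B∞`. -/
theorem sigFam (n : ℕ) : IsBraidFam sig n := by
  constructor
  · intro i h1 _
    rw [show sig i = PresentedGroup.of (⟨i, h1⟩ : ℕ+) from dif_pos (by omega),
      show sig (i+1) = PresentedGroup.of (⟨i+1, by omega⟩ : ℕ+) from dif_pos (by omega)]
    exact braid_rel1 rfl
  · intro i j h1 h2 _
    rw [show sig i = PresentedGroup.of (⟨i, h1⟩ : ℕ+) from dif_pos (by omega),
      show sig j = PresentedGroup.of (⟨j, by omega⟩ : ℕ+) from dif_pos (by omega)]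
    exact braid_rel2 (by simp; omega)

/-- The canonical map `A n →* B∞`. -/
def iota (n : ℕ) : A n →* BraidInf := artinHom (sigFam n)

theorem iota_of (n : ℕ) (g : Gen n) : iota n (.of g) = sig g.1 := artinHom_of _ g

/-- Free-group level embeddings. -/
def emb (n : ℕ) : Gen n → ℕ+ := fun g => ⟨g.1, g.2.1⟩

def J (n : ℕ) : FreeGroup (Gen n) →* FreeGroup ℕ+ := FreeGroup.map (emb n)

theorem J_of (n : ℕ) (g : Gen n) : J n (.of g) = .of (emb n g) := FreeGroup.map.of

def incG {n m : ℕ} (h : n ≤ m) : Gen n → Gen m := fun g => ⟨g.1, g.2.1, by omega⟩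

def incFree {n m : ℕ} (h : n ≤ m) : FreeGroup (Gen n) →* FreeGroup (Gen m) :=
  FreeGroup.map (incG h)

theorem incFree_of {n m : ℕ} (h : n ≤ m) (g : Gen n) :
    incFree h (.of g) = .of (incG h g) := FreeGroup.map.of

theorem J_incFree {n m : ℕ} (h : n ≤ m) :
    (J m).comp (incFree h) = J n := by
  apply FreeGroup.ext_hom
  intro g
  rw [MonoidHom.comp_apply, incFree_of, J_of, J_of]
  rfl

theorem J_injective {n : ℕ} (hn : 2 ≤ n) : Function.Injective (J n) := by
  set r : ℕ+ → Gen n := fun a =>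
    if h : (a : ℕ) < n then ⟨(a : ℕ), a.2, h⟩ else ⟨1, le_refl 1, by omega⟩ with hr
  have : ∀ w, FreeGroup.map r (J n w) = w := by
    intro w
    have hcomp : (FreeGroup.map r).comp (J n) = MonoidHom.id _ := by
      apply FreeGroup.ext_hom
      intro g
      rw [MonoidHom.comp_apply, J_of, MonoidHom.id_apply]
      have : FreeGroup.map r (FreeGroup.of (emb n g)) = .of (r (emb n g)) := FreeGroup.map.of
      rw [this]
      congr 1
      have hlt : ((emb n g : ℕ+) : ℕ) < n := g.2.2
      rw [hr]
      dsimp only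
      rw [dif_pos hlt]
      rfl
    calc FreeGroup.map r (J n w) = ((FreeGroup.map r).comp (J n)) w := rfl
      _ = w := by rw [hcomp]; rfl
  intro a b hab
  rw [← this a, ← this b, hab]

theorem map_normalClosure_le {G H : Type*} [Group G] [Group H] (φ : G →* H)
    (s : Set G) : Subgroup.map φ (Subgroup.normalClosure s) ≤
      Subgroup.normalClosure (φ '' s) := by
  rw [Subgroup.map_le_iff_le_comap]
  apply Subgroup.normalClosure_le_normal
  intro x hx
  exact Subgroup.subset_normalClosure ⟨x, hx, rfl⟩

theorem incFree_rels {n m : ℕ} (h : n ≤ m) :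
    incFree h '' artinRels n ⊆ artinRels m := by
  rintro r ⟨r', ⟨i, j, ⟨hc, rfl⟩ | ⟨hc, rfl⟩⟩, rfl⟩
  · refine ⟨incG h i, incG h j, Or.inl ⟨hc, ?_⟩⟩
    simp only [map_mul, map_inv, incFree_of]
  · refine ⟨incG h i, incG h j, Or.inr ⟨hc, ?_⟩⟩
    simp only [map_mul, map_inv, incFree_of]

theorem incFree_ncl {n m : ℕ} (h : n ≤ m) {v : FreeGroup (Gen n)}
    (hv : v ∈ Subgroup.normalClosure (artinRels n)) :
    incFree h v ∈ Subgroup.normalClosure (artinRels m) := by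
  have h1 : incFree h v ∈ Subgroup.map (incFree h) (Subgroup.normalClosure (artinRels n)) :=
    ⟨v, hv, rfl⟩
  have h2 := map_normalClosure_le (incFree h) (artinRels n) h1
  exact Subgroup.normalClosure_mono (incFree_rels h) h2

/-- Every element of `FreeGroup ℕ+` comes from a finite stage. -/
theorem exists_stage (w : FreeGroup ℕ+) : ∃ m : ℕ, ∃ u : FreeGroup (Gen m), J m u = w := by
  induction w using FreeGroup.induction_on with
  | C1 => exact ⟨2, 1, map_one _⟩
  | of a =>
    refine ⟨(a : ℕ) + 1, .of ⟨(a : ℕ), ⟨a.2, by omega⟩⟩, ?_⟩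
    rw [J_of]
    congr 1
  | inv_of a ih =>
    obtain ⟨m, u, hu⟩ := ih
    exact ⟨m, u⁻¹, by rw [map_inv, hu]⟩
  | mul a b iha ihb =>
    obtain ⟨m1, u1, hu1⟩ := iha
    obtain ⟨m2, u2, hu2⟩ := ihb
    refine ⟨max m1 m2, incFree (le_max_left m1 m2) u1 * incFree (le_max_right m1 m2) u2, ?_⟩
    rw [map_mul]
    have e1 : J (max m1 m2) (incFree (le_max_left m1 m2) u1) = J m1 u1 := by
      rw [← J_incFree (le_max_left m1 m2)]; rfl
    have e2 : J (max m1 m2) (incFree (le_max_right m1 m2) u2) = J m2 u2 := by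
      rw [← J_incFree (le_max_right m1 m2)]; rfl
    rw [e1, e2, hu1, hu2]

/-- The union of the images of the finite-stage normal closures. -/
def NN : Subgroup (FreeGroup ℕ+) where
  carrier := {w | ∃ m : ℕ, ∃ v ∈ Subgroup.normalClosure (artinRels m), J m v = w}
  one_mem' := ⟨2, 1, one_mem _, map_one _⟩
  mul_mem' := by
    rintro a b ⟨m1, v1, hv1, rfl⟩ ⟨m2, v2, hv2, rfl⟩
    refine ⟨max m1 m2, incFree (le_max_left m1 m2) v1 * incFree (le_max_right m1 m2) v2,
      mul_mem (incFree_ncl _ hv1) (incFree_ncl _ hv2), ?_⟩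
    rw [map_mul]
    have e1 : J (max m1 m2) (incFree (le_max_left m1 m2) v1) = J m1 v1 := by
      rw [← J_incFree (le_max_left m1 m2)]; rfl
    have e2 : J (max m1 m2) (incFree (le_max_right m1 m2) v2) = J m2 v2 := by
      rw [← J_incFree (le_max_right m1 m2)]; rfl
    rw [e1, e2]
  inv_mem' := by
    rintro a ⟨m, v, hv, rfl⟩
    exact ⟨m, v⁻¹, inv_mem hv, map_inv _ _⟩

instance NN_normal : NN.Normal := by
  constructor
  rintro w ⟨m, v, hv, rfl⟩ g
  obtain ⟨m2, u, hu⟩ := exists_stage g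
  refine ⟨max m m2, incFree (le_max_right m m2) u * incFree (le_max_left m m2) v *
    (incFree (le_max_right m m2) u)⁻¹, ?_, ?_⟩
  · have hN : (Subgroup.normalClosure (artinRels (max m m2))).Normal :=
      Subgroup.normalClosure_normal
    exact hN.conj_mem _ (incFree_ncl _ hv) _
  · have e1 : J (max m m2) (incFree (le_max_right m m2) u) = J m2 u := by
      rw [← J_incFree (le_max_right m m2)]; rfl
    have e2 : J (max m m2) (incFree (le_max_left m m2) v) = J m v := by
      rw [← J_incFree (le_max_left m m2)]; rfl
    rw [map_mul, map_mul, map_inv, e1, e2, hu]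

theorem braidRels_subset_NN : braidRels ⊆ NN.carrier := by
  rintro r ⟨i, j, ⟨hc, rfl⟩ | ⟨hc, rfl⟩⟩
  · refine ⟨(j : ℕ) + 1,
      FreeGroup.of (⟨(i:ℕ), i.2, by omega⟩ : Gen ((j:ℕ)+1)) *
        .of ⟨(j:ℕ), j.2, by omega⟩ * .of ⟨(i:ℕ), i.2, by omega⟩ *
        (.of ⟨(j:ℕ), j.2, by omega⟩ * .of ⟨(i:ℕ), i.2, by omega⟩ *
          .of ⟨(j:ℕ), j.2, by omega⟩)⁻¹, ?_, ?_⟩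
    · exact Subgroup.subset_normalClosure ⟨_, _, Or.inl ⟨by simpa using hc, rfl⟩⟩
    · simp only [map_mul, map_inv, J_of]
      rfl
  · refine ⟨(j : ℕ) + 1,
      FreeGroup.of (⟨(i:ℕ), i.2, by omega⟩ : Gen ((j:ℕ)+1)) *
        .of ⟨(j:ℕ), j.2, by omega⟩ *
        (.of ⟨(j:ℕ), j.2, by omega⟩ * .of ⟨(i:ℕ), i.2, by omega⟩)⁻¹, ?_, ?_⟩
    · exact Subgroup.subset_normalClosure ⟨_, _, Or.inr ⟨by simpa using hc, rfl⟩⟩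
    · simp only [map_mul, map_inv, J_of]
      rfl

theorem iota_mk (n : ℕ) (w : FreeGroup (Gen n)) :
    iota n (PresentedGroup.mk _ w) = PresentedGroup.mk braidRels (J n w) := by
  have h : (iota n).comp (PresentedGroup.mk (artinRels n)) =
      (PresentedGroup.mk braidRels).comp (J n) := by
    apply FreeGroup.ext_hom
    intro g
    rw [MonoidHom.comp_apply, MonoidHom.comp_apply, J_of]
    calc iota n (PresentedGroup.mk _ (FreeGroup.of g)) = iota n (.of g) := rfl
      _ = sig g.1 := iota_of n g
      _ = PresentedGroup.of (emb n g) := by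
          rw [show sig g.1 = PresentedGroup.of (⟨g.1, g.2.1⟩ : ℕ+) from dif_pos g.2.1]
          rfl
  calc iota n (PresentedGroup.mk _ w) = ((iota n).comp (PresentedGroup.mk (artinRels n))) w := rfl
    _ = PresentedGroup.mk braidRels (J n w) := by rw [h]; rfl

theorem thetaLE_mk {n m : ℕ} (h : n ≤ m) (w : FreeGroup (Gen n)) :
    thetaLE h (PresentedGroup.mk _ w) = PresentedGroup.mk _ (incFree h w) := by
  have h2 : (thetaLE h).comp (PresentedGroup.mk (artinRels n)) =
      (PresentedGroup.mk (artinRels m)).comp (incFree h) := by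
    apply FreeGroup.ext_hom
    intro g
    rw [MonoidHom.comp_apply, MonoidHom.comp_apply, incFree_of]
    calc thetaLE h (PresentedGroup.mk _ (FreeGroup.of g)) = thetaLE h (.of g) := rfl
      _ = sg m g.1 := thetaLE_of h g
      _ = PresentedGroup.of (incG h g) := by
          rw [sg_of m ⟨g.2.1, by have := g.2.2; omega⟩]
          rfl
  calc thetaLE h (PresentedGroup.mk _ w)
      = ((thetaLE h).comp (PresentedGroup.mk (artinRels n))) w := rfl
    _ = PresentedGroup.mk _ (incFree h w) := by rw [h2]; rfl

theorem iota_injective {n : ℕ} (hn : 2 ≤ n) : Function.Injective (iota n) := by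
  rw [injective_iff_map_eq_one]
  intro u hu
  obtain ⟨w, rfl⟩ := PresentedGroup.mk_surjective (artinRels n) u
  rw [iota_mk] at hu
  have hw : J n w ∈ Subgroup.normalClosure braidRels := (QuotientGroup.eq_one_iff _).mp hu
  have hNN : J n w ∈ NN := Subgroup.normalClosure_le_normal braidRels_subset_NN hw
  obtain ⟨m, v, hv, hJv⟩ := hNN
  -- pass to the common stage M = max m n
  set M := max m n with hM
  have hv' : incFree (le_max_left m n) v ∈ Subgroup.normalClosure (artinRels M) :=
    incFree_ncl _ hv
  have hJ1 : J M (incFree (le_max_left m n) v) = J n w := by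
    rw [show J M (incFree (le_max_left m n) v) = J m v from by rw [← J_incFree (le_max_left m n)]; rfl, hJv]
  have hJ2 : J M (incFree (le_max_right m n) w) = J n w := by
    rw [← J_incFree (le_max_right m n : n ≤ M)]; rfl
  have heq : incFree (le_max_left m n) v = incFree (le_max_right m n) w :=
    J_injective (by omega) (by rw [hJ1, hJ2])
  have h1 : thetaLE (le_max_right m n : n ≤ M) (PresentedGroup.mk _ w) = 1 := by
    rw [thetaLE_mk, ← heq]
    exact (QuotientGroup.eq_one_iff _).mpr hv'
  have := thetaLE_injective (le_max_right m n : n ≤ M)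
  rw [injective_iff_map_eq_one] at this
  exact this _ h1

theorem iota_range (n : ℕ) : (iota n).range = Bsub n := by
  have h1 : (iota n).range = Subgroup.map (iota n) ⊤ := (iota n).range_eq_map
  rw [h1, ← PresentedGroup.closure_range_of (artinRels n), MonoidHom.map_closure]
  unfold Bsub
  congr 1
  ext x
  constructor
  · rintro ⟨y, ⟨g, rfl⟩, rfl⟩
    refine ⟨g.1, g.2.1, g.2.2, ?_⟩
    rw [iota_of]
  · rintro ⟨i, h1, h2, rfl⟩
    refine ⟨.of ⟨i, h1, h2⟩, ⟨_, rfl⟩, ?_⟩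
    rw [iota_of]

end BraidWork
namespace BraidWork

theorem ascProd_congr {G : Type*} [Group G] {f g : ℕ → G} {a b : ℕ}
    (h : ∀ t, a ≤ t → t ≤ b → f t = g t) : ascProd f a b = ascProd g a b := by
  unfold ascProd
  congr 1
  apply List.map_congr_left
  intro t ht
  rw [List.mem_range'_1] at ht
  exact h t ht.1 (by omega)

theorem ggF_junk {G : Type*} [Group G] {f : ℕ → G} {k : ℕ} (h : f k = 1) : ggF f k = 1 := by
  unfold ggF
  rw [h]
  group

variable (n : ℕ)

/-- The generators of the EB-tilde presented group, as an `ℕ`-indexed family. -/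
def ge (j : ℕ) : PresentedGroup (ebTildeRels n) :=
  if h : 1 ≤ j ∧ j < n then PresentedGroup.of ⟨j, h⟩ else 1

theorem mk_ebtGen (j : ℕ) : PresentedGroup.mk (ebTildeRels n) (ebtGen n j) = ge n j := by
  unfold ebtGen ge
  split
  · rfl
  · exact map_one _

theorem geFam : IsEBFam (ge n) n := by
  intro k l hk hkl hln
  have hrel : (ebtGen n l * ascProd (ebtGen n) k (l - 2) * ebtGen n (l - 1) * ebtGen n l) *
      (ebtGen n (l - 1) * ebtGen n l * ascProd (ebtGen n) k (l - 2) *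
        ebtGen n (l - 1))⁻¹ ∈ ebTildeRels n :=
    ⟨k, l, hk, hkl, hln, rfl⟩
  have h2 : PresentedGroup.mk (ebTildeRels n)
      ((ebtGen n l * ascProd (ebtGen n) k (l - 2) * ebtGen n (l - 1) * ebtGen n l) *
        (ebtGen n (l - 1) * ebtGen n l * ascProd (ebtGen n) k (l - 2) *
          ebtGen n (l - 1))⁻¹) = 1 :=
    (QuotientGroup.eq_one_iff _).mpr (Subgroup.subset_normalClosure hrel)
  simp only [map_mul, map_inv] at h2
  rw [mul_inv_eq_one] at h2
  have hasc : PresentedGroup.mk (ebTildeRels n) (ascProd (ebtGen n) k (l - 2)) =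
      ascProd (ge n) k (l - 2) := by
    rw [ascProd_map]
    exact ascProd_congr (fun t _ _ => mk_ebtGen n t)
  unfold EBRel
  simpa only [hasc, mk_ebtGen] using h2

theorem chi_rels : ∀ r ∈ ebTildeRels n,
    FreeGroup.lift (fun g : Gen n => ggF (sg n) g.1) r = 1 := by
  rintro r ⟨k, l, hk, hkl, hln, rfl⟩
  have hval : ∀ j : ℕ, FreeGroup.lift (fun g : Gen n => ggF (sg n) g.1) (ebtGen n j) =
      ggF (sg n) j := by
    intro j
    unfold ebtGen
    split
    · exact FreeGroup.lift_apply_of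
    · rw [map_one]
      exact (ggF_junk (by unfold sg; rw [dif_neg ‹¬_›])).symm
  have hasc : FreeGroup.lift (fun g : Gen n => ggF (sg n) g.1) (ascProd (ebtGen n) k (l-2)) =
      ascProd (ggF (sg n)) k (l - 2) := by
    rw [ascProd_map]
    exact ascProd_congr (fun t _ _ => hval t)
  simp only [map_mul, map_inv, hval, hasc]
  rw [mul_inv_eq_one]
  exact (sgFam n).ggF_isEBFam k l hk hkl hln

/-- The homomorphism from the EB-tilde presented group to `A n`. -/
def chi : PresentedGroup (ebTildeRels n) →* A n :=
  PresentedGroup.toGroup (chi_rels n)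

theorem chi_of (g : Gen n) : chi n (.of g) = ggF (sg n) g.1 :=
  PresentedGroup.toGroup.of _

theorem chi_ge (j : ℕ) : chi n (ge n j) = ggF (sg n) j := by
  unfold ge
  split
  · exact chi_of n _
  · rw [map_one]
    exact (ggF_junk (by unfold sg; rw [dif_neg ‹¬_›])).symm

/-- The homomorphism from `A n` to the EB-tilde presented group. -/
def psi : A n →* PresentedGroup (ebTildeRels n) :=
  artinHom (IsEBFamLemmas.ggF_isBraidFam (geFam n))

theorem psi_of (g : Gen n) : psi n (.of g) = ggF (ge n) g.1 :=
  artinHom_of _ g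

theorem psi_sg (j : ℕ) : psi n (sg n j) = ggF (ge n) j := by
  unfold sg
  split
  · exact psi_of n _
  · rw [map_one]
    exact (ggF_junk (by unfold ge; rw [dif_neg ‹¬_›])).symm

theorem psi_chi (x : PresentedGroup (ebTildeRels n)) : psi n (chi n x) = x := by
  have h : (psi n).comp (chi n) = MonoidHom.id _ := by
    apply PresentedGroup.ext
    intro g
    rw [MonoidHom.comp_apply, chi_of, MonoidHom.id_apply, ggF_map,
      show (fun i => psi n (sg n i)) = ggF (ge n) from funext (psi_sg n), ggF_ggF]
    unfold ge
    rw [dif_pos g.2]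
  calc psi n (chi n x) = ((psi n).comp (chi n)) x := rfl
    _ = x := by rw [h]; rfl

theorem chi_psi (x : A n) : chi n (psi n x) = x := by
  have h : (chi n).comp (psi n) = MonoidHom.id _ := by
    apply PresentedGroup.ext
    intro g
    rw [MonoidHom.comp_apply, psi_of, MonoidHom.id_apply, ggF_map,
      show (fun i => chi n (ge n i)) = ggF (sg n) from funext (chi_ge n), ggF_ggF]
    unfold sg
    rw [dif_pos g.2]
  calc chi n (psi n x) = ((chi n).comp (psi n)) x := rfl
    _ = x := by rw [h]; rfl

/-- The EB-tilde presented group is isomorphic to `A n`. -/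
def ebtEquiv : PresentedGroup (ebTildeRels n) ≃* A n :=
  { toFun := chi n
    invFun := psi n
    left_inv := psi_chi n
    right_inv := chi_psi n
    map_mul' := (chi n).map_mul }

end BraidWork
/-- For every `n ≥ 3`, the group presented by generators `g̃_1, …, g̃_{n−1}` subject to the
relations (EB~) is isomorphic to the braid group `B_n`. -/
theorem ebTilde_presentation (n : ℕ) (hn : 3 ≤ n) :
    Nonempty (PresentedGroup (ebTildeRels n) ≃* Bsub n) := by
  refine ⟨(BraidWork.ebtEquiv n).trans (?_ : BraidWork.A n ≃* Bsub n)⟩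
  exact (MonoidHom.ofInjective (BraidWork.iota_injective (n := n) (by omega))).trans
    (MulEquiv.subgroupCongr (BraidWork.iota_range n))
end

section
/- Let p ≥ 2 be an integer and set ω = exp(2πi/p) if p is odd and ω = exp(πi/p) if p is even. Let A be a unital complex *-algebra containing unitaries (e_i)_{i ≥ 0} (i.e., e_i* e_i = e_i e_i* = 1) satisfying e_i^p = 1 for all i and e_i e_j = ω² e_j e_i whenever i < j. Define v_i = ω e_{i−1}* e_i for i ≥ 1 and u_i = p^{−1/2} Σ_{k=0}^{p−1} ω^{k²} v_i^k. Then: (a) v_i^p = 1, v_i v_{i+1} = ω² v_{i+1} v_i, and v_i v_j = v_j v_i when |i−j| > 1; (b) each u_i is unitary; (c) the u_i satisfy the braid relations u_i u_{i+1} u_i = u_{i+1} u_i u_{i+1} and u_i u_j = u_j u_i for |i−j| > 1; and (d) u_{i+1} e_i u_{i+1}* = e_{i+1} for all i ≥ 0. -/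
open scoped BigOperators

/-- `ω = exp(2πi/p)` if `p` is odd and `ω = exp(πi/p)` if `p` is even. -/
noncomputable def omegaP (p : ℕ) : ℂ :=
  if Odd p then Complex.exp (2 * Real.pi * Complex.I / p)
  else Complex.exp (Real.pi * Complex.I / p)

/-- `v_i = ω e_{i−1}* e_i` (for `i ≥ 1`). -/
noncomputable def vGen {A : Type*} [Ring A] [Algebra ℂ A] [StarRing A]
    (p : ℕ) (e : ℕ → A) (i : ℕ) : A :=
  omegaP p • (star (e (i - 1)) * e i)

/-- `u_i = p^{−1/2} ∑_{k=0}^{p−1} ω^{k²} v_i^k`. -/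
noncomputable def uGen {A : Type*} [Ring A] [Algebra ℂ A] [StarRing A]
    (p : ℕ) (e : ℕ → A) (i : ℕ) : A :=
  ((Real.sqrt p : ℂ))⁻¹ • ∑ k ∈ Finset.range p, (omegaP p) ^ (k ^ 2) • (vGen p e i) ^ k


namespace GaussRep

lemma pow_mod_eq {M : Type*} [Monoid M] (a : M) {d : ℕ} (h : a ^ d = 1) (m : ℕ) :
    a ^ m = a ^ (m % d) := by
  conv_lhs => rw [← Nat.div_add_mod m d]
  rw [pow_add, pow_mul, h, one_pow, one_mul]

lemma pow_eq_pow_of_dvd {M : Type*} [Monoid M] (a : M) {d : ℕ} (h : a ^ d = 1)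
    {m n : ℕ} (hmn : (d:ℤ) ∣ (n:ℤ) - (m:ℤ)) : a ^ m = a ^ n := by
  rw [pow_mod_eq a h m, pow_mod_eq a h n]
  congr 1
  exact Nat.modEq_iff_dvd.mpr hmn

lemma conj_exp_unit (t : ℝ) :
    (starRingEnd ℂ) (Complex.exp (t * Complex.I)) * Complex.exp (t * Complex.I) = 1 := by
  rw [← Complex.exp_conj, ← Complex.exp_add]
  have : (starRingEnd ℂ) ((t : ℂ) * Complex.I) + (t : ℂ) * Complex.I = 0 := by
    simp [map_mul, Complex.conj_ofReal, Complex.conj_I]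
  rw [this, Complex.exp_zero]

lemma omegaP_spec (p : ℕ) (hp : 2 ≤ p) : ∃ d : ℕ,
    omegaP p ^ d = 1 ∧ ((d:ℤ) ∣ 2 * p) ∧ ((d:ℤ) ∣ (p:ℤ)^2) ∧
    (starRingEnd ℂ) (omegaP p) * omegaP p = 1 ∧ IsPrimitiveRoot (omegaP p ^ 2) p := by
  have hp0 : (p:ℂ) ≠ 0 := Nat.cast_ne_zero.mpr (by omega)
  by_cases hodd : Odd p
  · have hω : omegaP p = Complex.exp ((2 * Real.pi / p : ℝ) * Complex.I) := by
      simp only [omegaP, if_pos hodd]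
      congr 1
      push_cast
      ring
    refine ⟨p, ?_, ⟨2, by ring⟩, ⟨p, by ring⟩, ?_, ?_⟩
    · rw [hω, ← Complex.exp_nat_mul]
      rw [show (p : ℂ) * ((2 * Real.pi / p : ℝ) * Complex.I) = 2 * Real.pi * Complex.I by
        push_cast; field_simp]
      exact Complex.exp_two_pi_mul_I
    · rw [hω]; exact conj_exp_unit _
    · have h1 : IsPrimitiveRoot (Complex.exp (2 * Real.pi * Complex.I / p)) p :=
        Complex.isPrimitiveRoot_exp p (by omega)
      have hcop : Nat.Coprime 2 p := by
        obtain ⟨k, rfl⟩ := hodd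
        exact (Nat.prime_two.coprime_iff_not_dvd).mpr (by omega)
      have h2 := h1.pow_of_coprime 2 hcop
      convert h2 using 2
      simp only [omegaP, if_pos hodd]
  · have hω : omegaP p = Complex.exp ((Real.pi / p : ℝ) * Complex.I) := by
      simp only [omegaP, if_neg hodd]
      congr 1
      push_cast
      ring
    obtain ⟨m, hm⟩ : ∃ m, p = m + m := Nat.not_odd_iff_even.mp hodd
    have hmz : (p:ℤ) = 2 * m := by
      have h' : (p:ℤ) = (m:ℤ) + m := by exact_mod_cast hm
      linarith
    refine ⟨2 * p, ?_, ⟨1, by push_cast; ring⟩, ⟨m, by rw [show ((2*p:ℕ):ℤ) = 2*(p:ℤ) by push_cast; ring, hmz]; ring⟩, ?_, ?_⟩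
    · rw [hω, ← Complex.exp_nat_mul]
      rw [show ((2 * p : ℕ) : ℂ) * ((Real.pi / p : ℝ) * Complex.I) = 2 * Real.pi * Complex.I by
        push_cast; field_simp]
      exact Complex.exp_two_pi_mul_I
    · rw [hω]; exact conj_exp_unit _
    · have h2 : omegaP p ^ 2 = Complex.exp (2 * Real.pi * Complex.I / p) := by
        rw [hω, ← Complex.exp_nat_mul]
        congr 1
        push_cast
        field_simp
      rw [h2]
      exact Complex.isPrimitiveRoot_exp p (by omega)

lemma natCast_val_self (p : ℕ) [NeZero p] (x : ZMod p) : ((x.val : ℕ) : ZMod p) = x := by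
  rw [ZMod.natCast_val, ZMod.cast_id]

lemma val_lift (p : ℕ) [NeZero p] (z : ZMod p) (n : ℤ) (hn : (n : ZMod p) = z) :
    ∃ k : ℤ, n = (z.val : ℤ) + p * k := by
  have h2 : (((n - (z.val : ℤ)) : ℤ) : ZMod p) = 0 := by
    push_cast
    rw [hn, natCast_val_self]
    ring
  obtain ⟨k, hk⟩ := (ZMod.intCast_zmod_eq_zero_iff_dvd _ p).mp h2
  exact ⟨k, by linarith⟩

lemma dvd_sq_val (p d : ℕ) [NeZero p] (h2p : (d:ℤ) ∣ 2 * p) (hp2 : (d:ℤ) ∣ (p:ℤ)^2)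
    (z : ZMod p) (n : ℤ) (hn : (n : ZMod p) = z) :
    (d:ℤ) ∣ ((z.val:ℤ)^2 - n^2) := by
  obtain ⟨k, hk⟩ := val_lift p z n hn
  have he : (z.val:ℤ)^2 - n^2 = (2*p) * (-((z.val:ℤ)*k)) + (p:ℤ)^2 * (-(k*k)) := by
    rw [hk]; ring
  rw [he]
  exact dvd_add (h2p.mul_right _) (hp2.mul_right _)

lemma dvd_lin_val (p d : ℕ) [NeZero p] (h2p : (d:ℤ) ∣ 2 * p)
    (z : ZMod p) (n : ℤ) (hn : (n : ZMod p) = z) :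
    (d:ℤ) ∣ (2*(z.val:ℤ) - 2*n) := by
  obtain ⟨k, hk⟩ := val_lift p z n hn
  have he : 2*(z.val:ℤ) - 2*n = (2*p) * (-k) := by rw [hk]; ring
  rw [he]
  exact h2p.mul_right _



noncomputable def CC (p : ℕ) (ω : ℂ) (x : ZMod p) : ℂ := ω ^ (x.val ^ 2)

noncomputable def QQ (p : ℕ) (ω : ℂ) (x : ZMod p) : ℂ := ω ^ (2 * x.val)

noncomputable def VV {A : Type*} [Monoid A] (p : ℕ) (v : A) (x : ZMod p) : A := v ^ x.val

noncomputable def SS {A : Type*} [Ring A] [Algebra ℂ A] (p : ℕ) [NeZero p] (ω : ℂ) (v : A) : A :=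
  ∑ x : ZMod p, CC p ω x • VV p v x

section Identities

variable (p d : ℕ) [NeZero p] (ω : ℂ)

lemma CC_zero : CC p ω 0 = 1 := by simp [CC]

lemma QQ_zero : QQ p ω 0 = 1 := by simp [QQ]

lemma conj_CC (hc : (starRingEnd ℂ) ω * ω = 1) (x : ZMod p) :
    (starRingEnd ℂ) (CC p ω x) * CC p ω x = 1 := by
  rw [CC, map_pow, ← mul_pow, hc, one_pow]

variable (hd : ω ^ d = 1) (h2p : (d:ℤ) ∣ 2 * p) (hp2 : (d:ℤ) ∣ (p:ℤ)^2)

include hd h2p hp2 in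
lemma CC_neg (x : ZMod p) : CC p ω (-x) = CC p ω x := by
  apply pow_eq_pow_of_dvd ω hd
  have h := dvd_sq_val p d h2p hp2 (-x) (-(x.val:ℤ))
    (by push_cast [natCast_val_self]; ring)
  have e : ((x.val:ℤ)^2) - ((-x).val:ℤ)^2 = -( (((-x).val:ℤ))^2 - (-(x.val:ℤ))^2 ) := by ring
  push_cast
  rw [e]
  exact dvd_neg.mpr h

include hd h2p hp2 in
lemma CC_add (x y : ZMod p) :
    CC p ω (x + y) = QQ p ω (x*y) * (CC p ω x * CC p ω y) := by
  rw [CC, CC, CC, QQ, ← pow_add, ← pow_add]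
  apply pow_eq_pow_of_dvd ω hd
  have h1 := dvd_sq_val p d h2p hp2 (x+y) ((x.val:ℤ) + y.val)
    (by push_cast [natCast_val_self]; ring)
  have h2 := dvd_lin_val p d h2p (x*y) ((x.val:ℤ) * y.val)
    (by push_cast [natCast_val_self]; ring)
  have e : ((2*(x*y).val + (x.val^2 + y.val^2) : ℕ) : ℤ) - (((x+y).val^2 : ℕ) : ℤ)
      = (2*((x*y).val:ℤ) - 2*((x.val:ℤ)*(y.val:ℤ)))
        - ( (((x+y).val:ℤ))^2 - ((x.val:ℤ)+(y.val:ℤ))^2 ) := by push_cast; ring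
  rw [e]
  exact dvd_sub h2 h1

include hd h2p in
lemma QQ_add (x y : ZMod p) : QQ p ω (x + y) = QQ p ω x * QQ p ω y := by
  rw [QQ, QQ, QQ, ← pow_add]
  apply pow_eq_pow_of_dvd ω hd
  have h := dvd_lin_val p d h2p (x+y) ((x.val:ℤ) + y.val)
    (by push_cast [natCast_val_self]; ring)
  have e : ((2*x.val + 2*y.val : ℕ) : ℤ) - ((2*(x+y).val : ℕ) : ℤ)
      = -(2*(((x+y).val:ℤ)) - 2*((x.val:ℤ)+(y.val:ℤ))) := by push_cast; ring
  rw [e]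
  exact dvd_neg.mpr h

include hd h2p in
lemma QQ_val_mul (x y : ZMod p) : ω ^ (2 * (x.val * y.val)) = QQ p ω (x * y) := by
  rw [QQ]
  apply pow_eq_pow_of_dvd ω hd
  have h := dvd_lin_val p d h2p (x*y) ((x.val:ℤ) * y.val)
    (by push_cast [natCast_val_self]; ring)
  have e : ((2*(x*y).val : ℕ) : ℤ) - ((2*(x.val*y.val) : ℕ) : ℤ)
      = 2*(((x*y).val:ℤ)) - 2*((x.val:ℤ)*(y.val:ℤ)) := by push_cast; ring
  rw [e]
  exact h

lemma sum_val {M : Type*} [AddCommMonoid M] (f : ℕ → M) :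
    ∑ x : ZMod p, f x.val = ∑ k ∈ Finset.range p, f k := by
  apply Finset.sum_nbij' (i := fun (x : ZMod p) => x.val) (j := fun k => (k : ZMod p))
  · intro a _; exact Finset.mem_range.mpr (ZMod.val_lt a)
  · intro a _; exact Finset.mem_univ _
  · intro a _; exact natCast_val_self p a
  · intro a ha; exact ZMod.val_cast_of_lt (Finset.mem_range.mp ha)
  · intro a _; rfl

lemma QQ_sum (hprim : IsPrimitiveRoot (ω^2) p) (m : ZMod p) :
    ∑ x : ZMod p, QQ p ω (x * m) = if m = 0 then (p:ℂ) else 0 := by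
  have hq : (ω^2)^p = 1 := hprim.pow_eq_one
  have step : ∀ x : ZMod p, QQ p ω (x*m) = ((ω^2)^(m.val))^(x.val) := by
    intro x
    rw [QQ, pow_mul, ZMod.val_mul, ← pow_mod_eq _ hq, mul_comm, pow_mul]
  rw [Finset.sum_congr rfl (fun x _ => step x)]
  rw [sum_val p (fun k => ((ω^2)^(m.val))^k)]
  by_cases hm : m = 0
  · subst hm
    simp [ZMod.val_zero, Finset.card_range]
  · have hz1 : (ω^2)^(m.val) ≠ 1 :=
      hprim.pow_ne_one_of_pos_of_lt (ZMod.val_pos.mpr hm).ne' (ZMod.val_lt m)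
    have hzp : ((ω^2)^(m.val))^p = 1 := by
      rw [← pow_mul, mul_comm, pow_mul, hq, one_pow]
    rw [geom_sum_eq hz1, hzp]
    simp [hm]

end Identities

section Vlemmas

variable {A : Type*} [Monoid A] (p : ℕ) [NeZero p] (v : A) (hv : v ^ p = 1)

lemma VV_zero : VV p v 0 = 1 := by simp [VV]

include hv in
lemma VV_natCast (m : ℕ) : VV p v (m : ZMod p) = v ^ m := by
  rw [VV, ZMod.val_natCast]
  exact (pow_mod_eq v hv m).symm

include hv in
lemma VV_add (x y : ZMod p) : VV p v (x + y) = VV p v x * VV p v y := by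
  rw [VV, VV, VV, ZMod.val_add, ← pow_mod_eq v hv, pow_add]

lemma VV_one (hp1 : 1 < p) : VV p v 1 = v := by
  haveI : Fact (1 < p) := ⟨hp1⟩
  rw [VV, ZMod.val_one, pow_one]

end Vlemmas

lemma star_VV {A : Type*} [Monoid A] [StarMul A] (p : ℕ) [NeZero p]
    (v : A) (hv : v ^ p = 1) (hsv : star v * v = 1) (x : ZMod p) :
    star (VV p v x) = VV p v (-x) := by
  have hp1 : 1 ≤ p := Nat.one_le_iff_ne_zero.mpr (NeZero.ne p)
  have hstar : star v = v ^ (p-1) := by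
    have h1 : v ^ p = v * v ^ (p-1) := by
      rw [← pow_succ']
      congr 1
      omega
    calc star v = star v * v ^ p := by rw [hv, mul_one]
    _ = (star v * v) * v ^ (p-1) := by rw [h1, ← mul_assoc]
    _ = v ^ (p-1) := by rw [hsv, one_mul]
  have hcast : (((p-1)*x.val : ℕ) : ZMod p) = -x := by
    rw [Nat.cast_mul, Nat.cast_sub hp1, ZMod.natCast_self, natCast_val_self]
    ring
  rw [VV, star_pow, hstar, ← pow_mul, ← hcast, VV_natCast p v hv]

lemma pow_swap_one {A : Type*} [Ring A] [Algebra ℂ A] (c : ℂ) (v w : A)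
    (h : v * w = c • (w * v)) : ∀ b : ℕ, v * w ^ b = c ^ b • (w ^ b * v) := by
  intro b
  induction b with
  | zero => simp
  | succ b ih =>
    rw [pow_succ, ← mul_assoc, ih, smul_mul_assoc, mul_assoc, h, mul_smul_comm,
      smul_smul, pow_succ, mul_assoc]

lemma pow_swap {A : Type*} [Ring A] [Algebra ℂ A] (c : ℂ) (v w : A)
    (h : v * w = c • (w * v)) : ∀ a b : ℕ, v ^ a * w ^ b = c ^ (a*b) • (w ^ b * v ^ a) := by
  intro a b
  induction a with
  | zero => simp
  | succ a ih =>
    rw [pow_succ, mul_assoc, pow_swap_one c v w h b, mul_smul_comm, ← mul_assoc, ih,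
      smul_mul_assoc, smul_smul, mul_assoc, ← pow_succ, ← pow_add]
    congr 2
    ring

lemma VV_swap {A : Type*} [Ring A] [Algebra ℂ A] (p d : ℕ) [NeZero p] (ω : ℂ)
    (hd : ω ^ d = 1) (h2p : (d:ℤ) ∣ 2 * p) (v w : A)
    (h : v * w = (ω^2) • (w * v)) (x y : ZMod p) :
    VV p v x * VV p w y = QQ p ω (x*y) • (VV p w y * VV p v x) := by
  rw [VV, VV, pow_swap (ω^2) v w h, ← pow_mul, QQ_val_mul p d ω hd h2p x y]



lemma CC_one (p : ℕ) [NeZero p] (ω : ℂ) (hp : 1 < p) : CC p ω 1 = ω := by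
  haveI : Fact (1 < p) := ⟨hp⟩
  rw [CC, ZMod.val_one]
  norm_num

section SSexpand

variable {A : Type*} [Ring A] [Algebra ℂ A] (p : ℕ) [NeZero p] (ω : ℂ)

lemma sum_comm3 {M : Type*} [AddCommMonoid M] {ι : Type*} [Fintype ι] (T : ι → ι → ι → M) :
    (∑ c : ι, ∑ b : ι, ∑ a : ι, T a b c) = ∑ a : ι, ∑ b : ι, ∑ c : ι, T a b c := by
  calc (∑ c : ι, ∑ b : ι, ∑ a : ι, T a b c)
      = ∑ b : ι, ∑ c : ι, ∑ a : ι, T a b c := Finset.sum_comm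
    _ = ∑ b : ι, ∑ a : ι, ∑ c : ι, T a b c :=
        Finset.sum_congr rfl fun b _ => Finset.sum_comm
    _ = ∑ a : ι, ∑ b : ι, ∑ c : ι, T a b c := Finset.sum_comm

lemma double_expand (f g : ZMod p → ℂ) (F G : ZMod p → A) :
    (∑ a : ZMod p, f a • F a) * (∑ b : ZMod p, g b • G b)
      = ∑ a : ZMod p, ∑ b : ZMod p, (f a * g b) • (F a * G b) := by
  simp only [Finset.sum_mul, Finset.mul_sum, smul_mul_smul_comm]
  exact Finset.sum_comm

lemma triple_expand (f g h : ZMod p → ℂ) (F G H : ZMod p → A) :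
    (∑ a : ZMod p, f a • F a) * (∑ b : ZMod p, g b • G b) * (∑ c : ZMod p, h c • H c)
      = ∑ a : ZMod p, ∑ b : ZMod p, ∑ c : ZMod p,
          ((f a * g b) * h c) • ((F a * G b) * H c) := by
  simp only [Finset.sum_mul, Finset.mul_sum, smul_mul_smul_comm]
  exact sum_comm3 _

end SSexpand

lemma star_SS {A : Type*} [Ring A] [Algebra ℂ A] [StarRing A] [StarModule ℂ A]
    (p : ℕ) [NeZero p] (ω : ℂ) (v : A) (hv : v ^ p = 1) (hsv : star v * v = 1) :
    star (SS p ω v) = ∑ x : ZMod p, (starRingEnd ℂ) (CC p ω x) • VV p v (-x) := by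
  rw [SS, star_sum]
  refine Finset.sum_congr rfl fun x _ => ?_
  rw [star_smul, star_VV p v hv hsv, ← starRingEnd_apply]

lemma SS_star_mul {A : Type*} [Ring A] [Algebra ℂ A] [StarRing A] [StarModule ℂ A]
    (p d : ℕ) [NeZero p] (ω : ℂ)
    (hd : ω ^ d = 1) (h2p : (d:ℤ) ∣ 2 * p) (hp2 : (d:ℤ) ∣ (p:ℤ)^2)
    (hc : (starRingEnd ℂ) ω * ω = 1) (hprim : IsPrimitiveRoot (ω^2) p)
    (v : A) (hv : v ^ p = 1) (hsv : star v * v = 1) :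
    star (SS p ω v) * SS p ω v = (p:ℂ) • (1:A) := by
  rw [star_SS p ω v hv hsv, SS, double_expand]
  calc (∑ x : ZMod p, ∑ y : ZMod p,
        ((starRingEnd ℂ) (CC p ω x) * CC p ω y) • (VV p v (-x) * VV p v y))
      = ∑ x : ZMod p, ∑ m : ZMod p, (QQ p ω (x*m) * CC p ω m) • VV p v m := by
        refine Finset.sum_congr rfl fun x _ => ?_
        refine (Fintype.sum_equiv (Equiv.addLeft x) _ _ fun m => ?_).symm
        simp only [Equiv.coe_addLeft]
        rw [← VV_add p v hv, neg_add_cancel_left, CC_add p d ω hd h2p hp2 x m]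
        congr 1
        have hcx := conj_CC p ω hc x
        linear_combination (-(QQ p ω (x*m) * CC p ω m)) * hcx
    _ = ∑ m : ZMod p, ((∑ x : ZMod p, QQ p ω (x*m)) * CC p ω m) • VV p v m := by
        rw [Finset.sum_comm]
        refine Finset.sum_congr rfl fun m _ => ?_
        rw [Finset.sum_mul, Finset.sum_smul]
    _ = (p:ℂ) • (1:A) := by
        simp only [QQ_sum p ω hprim, ite_mul, zero_mul, ite_smul, zero_smul,
          Finset.sum_ite_eq', Finset.mem_univ, if_true]
        rw [CC_zero, VV_zero, mul_one]

lemma SS_mul_star {A : Type*} [Ring A] [Algebra ℂ A] [StarRing A] [StarModule ℂ A]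
    (p d : ℕ) [NeZero p] (ω : ℂ)
    (hd : ω ^ d = 1) (h2p : (d:ℤ) ∣ 2 * p) (hp2 : (d:ℤ) ∣ (p:ℤ)^2)
    (hc : (starRingEnd ℂ) ω * ω = 1) (hprim : IsPrimitiveRoot (ω^2) p)
    (v : A) (hv : v ^ p = 1) (hsv : star v * v = 1) :
    SS p ω v * star (SS p ω v) = (p:ℂ) • (1:A) := by
  rw [star_SS p ω v hv hsv, SS, double_expand]
  calc (∑ x : ZMod p, ∑ y : ZMod p,
        (CC p ω x * (starRingEnd ℂ) (CC p ω y)) • (VV p v x * VV p v (-y)))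
      = ∑ y : ZMod p, ∑ x : ZMod p,
        (CC p ω x * (starRingEnd ℂ) (CC p ω y)) • (VV p v x * VV p v (-y)) :=
        Finset.sum_comm
    _ = ∑ y : ZMod p, ∑ m : ZMod p, (QQ p ω (y*m) * CC p ω m) • VV p v m := by
        refine Finset.sum_congr rfl fun y _ => ?_
        refine (Fintype.sum_equiv (Equiv.addLeft y) _ _ fun m => ?_).symm
        simp only [Equiv.coe_addLeft]
        rw [← VV_add p v hv, show y + m + -y = m by ring, CC_add p d ω hd h2p hp2 y m]
        congr 1
        have hcy := conj_CC p ω hc y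
        linear_combination (-(QQ p ω (y*m) * CC p ω m)) * hcy
    _ = ∑ m : ZMod p, ((∑ y : ZMod p, QQ p ω (y*m)) * CC p ω m) • VV p v m := by
        rw [Finset.sum_comm]
        refine Finset.sum_congr rfl fun m _ => ?_
        rw [Finset.sum_mul, Finset.sum_smul]
    _ = (p:ℂ) • (1:A) := by
        simp only [QQ_sum p ω hprim, ite_mul, zero_mul, ite_smul, zero_smul,
          Finset.sum_ite_eq', Finset.mem_univ, if_true]
        rw [CC_zero, VV_zero, mul_one]



lemma braid_key (p d : ℕ) [NeZero p] (ω : ℂ)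
    (hd : ω ^ d = 1) (h2p : (d:ℤ) ∣ 2 * p) (hp2 : (d:ℤ) ∣ (p:ℤ)^2) (x y : ZMod p) :
    (∑ a : ZMod p, CC p ω a * CC p ω (x-a) * QQ p ω (a*y)) * CC p ω y
      = (∑ a : ZMod p, CC p ω a * CC p ω (y-a) * QQ p ω (x*(y-a))) * CC p ω x := by
  rw [Finset.sum_mul, Finset.sum_mul]
  refine Fintype.sum_equiv (Equiv.addRight y) _ _ fun a => ?_
  simp only [Equiv.coe_addRight]
  rw [show y - (a + y) = -a by ring]
  simp only [CC, QQ]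
  simp only [← pow_add]
  apply pow_eq_pow_of_dvd ω hd
  have hxa := dvd_sq_val p d h2p hp2 (x-a) ((x.val:ℤ) - (a.val:ℤ))
    (by push_cast [natCast_val_self]; ring)
  have hay := dvd_lin_val p d h2p (a*y) ((a.val:ℤ) * (y.val:ℤ))
    (by push_cast [natCast_val_self]; ring)
  have hapy := dvd_sq_val p d h2p hp2 (a+y) ((a.val:ℤ) + (y.val:ℤ))
    (by push_cast [natCast_val_self]; ring)
  have hna := dvd_sq_val p d h2p hp2 (-a) (-(a.val:ℤ))
    (by push_cast [natCast_val_self]; ring)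
  have hxna := dvd_lin_val p d h2p (x*(-a)) ((x.val:ℤ) * (-(a.val:ℤ)))
    (by push_cast [natCast_val_self]; ring)
  have hbig := dvd_sub (dvd_add (dvd_add hapy hna) hxna) (dvd_add hxa hay)
  convert hbig using 1
  · rfl
  push_cast
  ring

lemma norm1 {A : Type*} [Ring A] [Algebra ℂ A] (p d : ℕ) [NeZero p] (ω : ℂ)
    (hd : ω ^ d = 1) (h2p : (d:ℤ) ∣ 2 * p) (hp2 : (d:ℤ) ∣ (p:ℤ)^2)
    (v w : A) (hv : v ^ p = 1) (hvw : v * w = (ω^2) • (w * v)) :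
    SS p ω v * SS p ω w * SS p ω v
      = ∑ y : ZMod p, ∑ x : ZMod p,
          ((∑ a : ZMod p, CC p ω a * CC p ω (x-a) * QQ p ω (a*y)) * CC p ω y)
            • (VV p w y * VV p v x) := by
  simp only [SS]
  rw [triple_expand]
  calc (∑ a : ZMod p, ∑ b : ZMod p, ∑ c : ZMod p,
        ((CC p ω a * CC p ω b) * CC p ω c) • ((VV p v a * VV p w b) * VV p v c))
      = ∑ a : ZMod p, ∑ b : ZMod p, ∑ c : ZMod p,
        (((CC p ω a * CC p ω b) * CC p ω c) * QQ p ω (a*b)) • (VV p w b * VV p v (a+c)) := by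
        refine Finset.sum_congr rfl fun a _ => Finset.sum_congr rfl fun b _ =>
          Finset.sum_congr rfl fun c _ => ?_
        rw [VV_swap p d ω hd h2p v w hvw a b, smul_mul_assoc,
          mul_assoc (VV p w b) (VV p v a) (VV p v c),
          ← VV_add p v hv, smul_smul]
    _ = ∑ a : ZMod p, ∑ b : ZMod p, ∑ x : ZMod p,
        (((CC p ω a * CC p ω b) * CC p ω (x-a)) * QQ p ω (a*b)) • (VV p w b * VV p v x) := by
        refine Finset.sum_congr rfl fun a _ => Finset.sum_congr rfl fun b _ => ?_
        refine Fintype.sum_equiv (Equiv.addLeft a) _ _ fun c => ?_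
        simp only [Equiv.coe_addLeft, add_sub_cancel_left]
    _ = ∑ y : ZMod p, ∑ x : ZMod p,
          ((∑ a : ZMod p, CC p ω a * CC p ω (x-a) * QQ p ω (a*y)) * CC p ω y)
            • (VV p w y * VV p v x) := by
        rw [Finset.sum_comm]
        refine Finset.sum_congr rfl fun y _ => ?_
        rw [Finset.sum_comm]
        refine Finset.sum_congr rfl fun x _ => ?_
        rw [Finset.sum_mul, Finset.sum_smul]
        refine Finset.sum_congr rfl fun a _ => ?_
        congr 1
        ring

lemma norm2 {A : Type*} [Ring A] [Algebra ℂ A] (p d : ℕ) [NeZero p] (ω : ℂ)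
    (hd : ω ^ d = 1) (h2p : (d:ℤ) ∣ 2 * p) (hp2 : (d:ℤ) ∣ (p:ℤ)^2)
    (v w : A) (hw : w ^ p = 1) (hvw : v * w = (ω^2) • (w * v)) :
    SS p ω w * SS p ω v * SS p ω w
      = ∑ y : ZMod p, ∑ x : ZMod p,
          ((∑ a : ZMod p, CC p ω a * CC p ω (y-a) * QQ p ω (x*(y-a))) * CC p ω x)
            • (VV p w y * VV p v x) := by
  simp only [SS]
  rw [triple_expand]
  calc (∑ a : ZMod p, ∑ b : ZMod p, ∑ c : ZMod p,
        ((CC p ω a * CC p ω b) * CC p ω c) • ((VV p w a * VV p v b) * VV p w c))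
      = ∑ a : ZMod p, ∑ b : ZMod p, ∑ c : ZMod p,
        (((CC p ω a * CC p ω b) * CC p ω c) * QQ p ω (b*c)) • (VV p w (a+c) * VV p v b) := by
        refine Finset.sum_congr rfl fun a _ => Finset.sum_congr rfl fun b _ =>
          Finset.sum_congr rfl fun c _ => ?_
        rw [mul_assoc (VV p w a) (VV p v b) (VV p w c),
          VV_swap p d ω hd h2p v w hvw b c, mul_smul_comm,
          ← mul_assoc (VV p w a) (VV p w c) (VV p v b), ← VV_add p w hw, smul_smul]
    _ = ∑ a : ZMod p, ∑ b : ZMod p, ∑ t : ZMod p,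
        (((CC p ω a * CC p ω b) * CC p ω (t-a)) * QQ p ω (b*(t-a))) • (VV p w t * VV p v b) := by
        refine Finset.sum_congr rfl fun a _ => Finset.sum_congr rfl fun b _ => ?_
        refine Fintype.sum_equiv (Equiv.addLeft a) _ _ fun c => ?_
        simp only [Equiv.coe_addLeft, add_sub_cancel_left]
    _ = ∑ y : ZMod p, ∑ x : ZMod p,
          ((∑ a : ZMod p, CC p ω a * CC p ω (y-a) * QQ p ω (x*(y-a))) * CC p ω x)
            • (VV p w y * VV p v x) := by
        calc (∑ a : ZMod p, ∑ b : ZMod p, ∑ t : ZMod p,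
              (((CC p ω a * CC p ω b) * CC p ω (t-a)) * QQ p ω (b*(t-a)))
                • (VV p w t * VV p v b))
            = ∑ b : ZMod p, ∑ t : ZMod p, ∑ a : ZMod p,
              (((CC p ω a * CC p ω b) * CC p ω (t-a)) * QQ p ω (b*(t-a)))
                • (VV p w t * VV p v b) := by
              rw [Finset.sum_comm]
              exact Finset.sum_congr rfl fun b _ => Finset.sum_comm
          _ = ∑ t : ZMod p, ∑ b : ZMod p, ∑ a : ZMod p,
              (((CC p ω a * CC p ω b) * CC p ω (t-a)) * QQ p ω (b*(t-a)))
                • (VV p w t * VV p v b) := Finset.sum_comm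
          _ = ∑ y : ZMod p, ∑ x : ZMod p,
              ((∑ a : ZMod p, CC p ω a * CC p ω (y-a) * QQ p ω (x*(y-a))) * CC p ω x)
                • (VV p w y * VV p v x) := by
              refine Finset.sum_congr rfl fun y _ => Finset.sum_congr rfl fun x _ => ?_
              rw [Finset.sum_mul, Finset.sum_smul]
              refine Finset.sum_congr rfl fun a _ => ?_
              congr 1
              ring

lemma SS_braid {A : Type*} [Ring A] [Algebra ℂ A] (p d : ℕ) [NeZero p] (ω : ℂ)
    (hd : ω ^ d = 1) (h2p : (d:ℤ) ∣ 2 * p) (hp2 : (d:ℤ) ∣ (p:ℤ)^2)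
    (v w : A) (hv : v ^ p = 1) (hw : w ^ p = 1) (hvw : v * w = (ω^2) • (w * v)) :
    SS p ω v * SS p ω w * SS p ω v = SS p ω w * SS p ω v * SS p ω w := by
  rw [norm1 p d ω hd h2p hp2 v w hv hvw, norm2 p d ω hd h2p hp2 v w hw hvw]
  refine Finset.sum_congr rfl fun y _ => Finset.sum_congr rfl fun x _ => ?_
  rw [braid_key p d ω hd h2p hp2 x y]

lemma SS_commute {A : Type*} [Ring A] [Algebra ℂ A] (p : ℕ) [NeZero p] (ω : ℂ)
    (v w : A) (hcomm : v * w = w * v) :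
    SS p ω v * SS p ω w = SS p ω w * SS p ω v := by
  rw [SS, SS, double_expand, double_expand]
  rw [Finset.sum_comm]
  refine Finset.sum_congr rfl fun b _ => Finset.sum_congr rfl fun a _ => ?_
  have h2 : VV p v a * VV p w b = VV p w b * VV p v a :=
    (Commute.pow_pow hcomm a.val b.val).symm ▸ rfl
  rw [mul_comm (CC p ω b) (CC p ω a), h2]

lemma SS_conj {A : Type*} [Ring A] [Algebra ℂ A] [StarRing A] [StarModule ℂ A]
    (p d : ℕ) [NeZero p] (hp : 1 < p) (ω : ℂ)
    (hd : ω ^ d = 1) (h2p : (d:ℤ) ∣ 2 * p) (hp2 : (d:ℤ) ∣ (p:ℤ)^2)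
    (hc : (starRingEnd ℂ) ω * ω = 1) (hprim : IsPrimitiveRoot (ω^2) p)
    (v f : A) (hv : v ^ p = 1) (hsv : star v * v = 1)
    (hf : f * v = (ω^2) • (v * f)) :
    SS p ω v * (f * star (SS p ω v)) = ((p:ℂ) * ω) • (v * f) := by
  have hfV : ∀ y : ZMod p, f * VV p v y = QQ p ω y • (VV p v y * f) := by
    intro y
    have h1 := pow_swap (ω^2) f v hf 1 y.val
    rw [pow_one, one_mul, ← pow_mul] at h1
    rw [VV, h1]
    rfl
  have step1 : f * star (SS p ω v)
      = ∑ y : ZMod p, ((starRingEnd ℂ) (CC p ω y) * QQ p ω (-y)) • (VV p v (-y) * f) := by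
    rw [star_SS p ω v hv hsv, Finset.mul_sum]
    refine Finset.sum_congr rfl fun y _ => ?_
    rw [mul_smul_comm, hfV (-y), smul_smul]
  rw [step1, SS, double_expand]
  calc (∑ x : ZMod p, ∑ y : ZMod p,
        (CC p ω x * ((starRingEnd ℂ) (CC p ω y) * QQ p ω (-y))) • (VV p v x * (VV p v (-y) * f)))
      = ∑ y : ZMod p, ∑ x : ZMod p,
        (CC p ω x * ((starRingEnd ℂ) (CC p ω y) * QQ p ω (-y))) • (VV p v x * (VV p v (-y) * f)) :=
        Finset.sum_comm
    _ = ∑ y : ZMod p, ∑ m : ZMod p, ((QQ p ω (y*(m-1)) * CC p ω m)) • (VV p v m * f) := by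
        refine Finset.sum_congr rfl fun y _ => ?_
        refine (Fintype.sum_equiv (Equiv.addLeft y) _ _ fun m => ?_).symm
        simp only [Equiv.coe_addLeft]
        rw [← mul_assoc (VV p v (y+m)) (VV p v (-y)) f, ← VV_add p v hv, show y + m + -y = m by ring,
          CC_add p d ω hd h2p hp2 y m,
          show y * (m-1) = y*m + -y by ring, QQ_add p d ω hd h2p (y*m) (-y)]
        congr 1
        have hcy := conj_CC p ω hc y
        linear_combination (-(QQ p ω (y*m) * QQ p ω (-y) * CC p ω m)) * hcy
    _ = ∑ m : ZMod p, ((∑ y : ZMod p, QQ p ω (y*(m-1))) * CC p ω m) • (VV p v m * f) := by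
        rw [Finset.sum_comm]
        refine Finset.sum_congr rfl fun m _ => ?_
        rw [Finset.sum_mul, Finset.sum_smul]
    _ = ((p:ℂ) * ω) • (v * f) := by
        simp only [QQ_sum p ω hprim, sub_eq_zero, ite_mul, zero_mul, ite_smul, zero_smul,
          Finset.sum_ite_eq', Finset.mem_univ, if_true]
        rw [CC_one p ω hp, VV_one p v hp]



lemma swap_head {A : Type*} [Ring A] [Algebra ℂ A] (c : ℂ) (x y r : A)
    (h : x * y = c • (y * x)) : x * (y * r) = c • (y * (x * r)) := by
  rw [← mul_assoc, h, smul_mul_assoc, mul_assoc]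

lemma prod_pow {A : Type*} [Ring A] [Algebra ℂ A] (ω : ℂ) (a b : A)
    (hba : b * a = (ω^2) • (a * b)) (n : ℕ) :
    (a * b) ^ n = ω ^ (n * (n-1)) • (a ^ n * b ^ n) := by
  induction n with
  | zero => simp
  | succ n ih =>
    have hswap := pow_swap (ω^2) b a hba n 1
    simp only [pow_one, Nat.mul_one] at hswap
    rw [← pow_mul] at hswap
    calc (a*b)^(n+1) = (a*b)^n * (a*b) := pow_succ _ _
    _ = (ω ^ (n*(n-1)) • (a^n * b^n)) * (a*b) := by rw [ih]
    _ = ω ^ (n*(n-1)) • (a^n * ((b^n * a) * b)) := by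
        rw [smul_mul_assoc, mul_assoc (a^n) (b^n) (a*b), ← mul_assoc (b^n) a b]
    _ = (ω ^ (n*(n-1)) * ω ^ (2*n)) • (a^(n+1) * b^(n+1)) := by
        rw [hswap, smul_mul_assoc, mul_smul_comm, smul_smul, mul_assoc a (b^n) b,
          ← mul_assoc (a^n) a (b^n * b), ← pow_succ, ← pow_succ]
    _ = ω ^ ((n+1) * ((n+1)-1)) • (a^(n+1) * b^(n+1)) := by
        rw [← pow_add]
        congr 2
        rcases n with _ | m
        · simp
        · simp only [Nat.add_sub_cancel]
          ring

end GaussRep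

/-- **Gaussian representations.** Let `p ≥ 2`, `ω = exp(2πi/p)` for odd `p` and
`ω = exp(πi/p)` for even `p`, and let `(e_i)_{i ≥ 0}` be unitaries in a unital complex
`*`-algebra `A` with `e_i^p = 1` and `e_i e_j = ω² e_j e_i` for `i < j`. With
`v_i = ω e_{i−1}* e_i` and `u_i = p^{−1/2} ∑_{k=0}^{p−1} ω^{k²} v_i^k` one has:
(a) `v_i^p = 1`, `v_i v_{i+1} = ω² v_{i+1} v_i` and `v_i v_j = v_j v_i` for `|i−j| > 1`;
(b) each `u_i` is unitary; (c) the `u_i` satisfy the braid relations; and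
(d) `u_{i+1} e_i u_{i+1}* = e_{i+1}` for all `i ≥ 0`. -/
theorem gaussian_representation (p : ℕ) (hp : 2 ≤ p)
    {A : Type*} [Ring A] [Algebra ℂ A] [StarRing A] [StarModule ℂ A]
    (e : ℕ → A)
    (he_unitary : ∀ i, star (e i) * e i = 1 ∧ e i * star (e i) = 1)
    (he_pow : ∀ i, e i ^ p = 1)
    (he_comm : ∀ i j, i < j → e i * e j = (omegaP p) ^ 2 • (e j * e i)) :
    (∀ i, 1 ≤ i → (vGen p e i) ^ p = 1) ∧
    (∀ i, 1 ≤ i → vGen p e i * vGen p e (i + 1)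
      = (omegaP p) ^ 2 • (vGen p e (i + 1) * vGen p e i)) ∧
    (∀ i j, 1 ≤ i → 1 ≤ j → (i + 1 < j ∨ j + 1 < i) →
      vGen p e i * vGen p e j = vGen p e j * vGen p e i) ∧
    (∀ i, 1 ≤ i → star (uGen p e i) * uGen p e i = 1 ∧ uGen p e i * star (uGen p e i) = 1) ∧
    (∀ i, 1 ≤ i → uGen p e i * uGen p e (i + 1) * uGen p e i
      = uGen p e (i + 1) * uGen p e i * uGen p e (i + 1)) ∧
    (∀ i j, 1 ≤ i → 1 ≤ j → (i + 1 < j ∨ j + 1 < i) →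
      uGen p e i * uGen p e j = uGen p e j * uGen p e i) ∧
    (∀ i : ℕ, uGen p e (i + 1) * e i * star (uGen p e (i + 1)) = e (i + 1)) := by
  classical
  haveI : NeZero p := ⟨by omega⟩
  obtain ⟨d, hωd, h2p, hp2, hcω, hprim⟩ := GaussRep.omegaP_spec p hp
  set ω : ℂ := omegaP p with hωdef
  set c' : ℂ := (starRingEnd ℂ) (ω^2) with hc'def
  have hcc : c' * ω^2 = 1 := by
    rw [hc'def, map_pow, ← mul_pow, hcω, one_pow]
  have hkey : ω^2 * c' = 1 := by rw [mul_comm]; exact hcc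
  -- unitary facts
  have h1 : ∀ i, star (e i) * e i = 1 := fun i => (he_unitary i).1
  have h2 : ∀ i, e i * star (e i) = 1 := fun i => (he_unitary i).2
  have hcanc1 : ∀ (i : ℕ) (r : A), star (e i) * (e i * r) = r := by
    intro i r; rw [← mul_assoc, h1, one_mul]
  have hcanc2 : ∀ (i : ℕ) (r : A), e i * (star (e i) * r) = r := by
    intro i r; rw [← mul_assoc, h2, one_mul]
  -- reversal helper
  have rev : ∀ (x y : A), x * y = (ω^2) • (y * x) → y * x = c' • (x * y) := by
    intro x y h
    have : c' • (x * y) = y * x := by rw [h, smul_smul, hcc, one_smul]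
    exact this.symm
  -- the relations
  have R1 : ∀ i j, i < j → e i * e j = (ω^2) • (e j * e i) := he_comm
  have R1r : ∀ i j, i < j → e j * e i = c' • (e i * e j) := fun i j hij => rev _ _ (R1 i j hij)
  have R2r : ∀ i j, i < j → star (e j) * star (e i) = c' • (star (e i) * star (e j)) := by
    intro i j hij
    have h := congrArg star (R1 i j hij)
    rw [star_mul, star_smul, star_mul] at h
    rw [h]
    rfl
  have R2 : ∀ i j, i < j → star (e i) * star (e j) = (ω^2) • (star (e j) * star (e i)) := by
    intro i j hij
    have h := R2r i j hij
    have : (ω^2) • (star (e j) * star (e i)) = star (e i) * star (e j) := by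
      rw [h, smul_smul, hkey, one_smul]
    exact this.symm
  have R3 : ∀ i j, i < j → e j * star (e i) = (ω^2) • (star (e i) * e j) := by
    intro i j hij
    calc e j * star (e i) = (star (e i) * e i) * (e j * star (e i)) := by rw [h1, one_mul]
    _ = star (e i) * ((e i * e j) * star (e i)) := by
        rw [mul_assoc (star (e i)) (e i) (e j * star (e i)), ← mul_assoc (e i) (e j) (star (e i))]
    _ = (ω^2) • (star (e i) * (e j * (e i * star (e i)))) := by
        rw [R1 i j hij, smul_mul_assoc, mul_smul_comm, mul_assoc (e j) (e i) (star (e i))]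
    _ = (ω^2) • (star (e i) * e j) := by rw [h2, mul_one]
  have R3r : ∀ i j, i < j → star (e i) * e j = c' • (e j * star (e i)) :=
    fun i j hij => rev _ _ (R3 i j hij)
  have R4 : ∀ i j, i < j → star (e j) * e i = (ω^2) • (e i * star (e j)) := by
    intro i j hij
    calc star (e j) * e i = star (e j) * (e i * (e j * star (e j))) := by rw [h2, mul_one]
    _ = star (e j) * ((e i * e j) * star (e j)) := by rw [← mul_assoc (e i) (e j) (star (e j))]
    _ = (ω^2) • (star (e j) * ((e j * e i) * star (e j))) := by
        rw [R1 i j hij, smul_mul_assoc, mul_smul_comm]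
    _ = (ω^2) • (e i * star (e j)) := by
        rw [← mul_assoc, ← mul_assoc, h1, one_mul]
  have R4r : ∀ i j, i < j → e i * star (e j) = c' • (star (e j) * e i) :=
    fun i j hij => rev _ _ (R4 i j hij)
  -- vGen expansion
  have hv_def : ∀ k : ℕ, vGen p e (k+1) = ω • (star (e k) * e (k+1)) := by
    intro k
    simp [vGen, hωdef]
  -- (a1) : v^p = 1
  have ha1 : ∀ i, 1 ≤ i → (vGen p e i) ^ p = 1 := by
    intro i hi
    obtain ⟨k, rfl⟩ : ∃ k, i = k + 1 := ⟨i - 1, by omega⟩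
    rw [hv_def k, smul_pow, GaussRep.prod_pow ω (star (e k)) (e (k+1)) (R3 k (k+1) (by omega)) p,
      smul_smul, ← pow_add, ← star_pow, he_pow, he_pow, star_one, one_mul]
    have hexp : p + p * (p-1) = p * p := by
      rcases p with _ | m
      · simp
      · simp only [Nat.add_sub_cancel]
        ring
    rw [hexp]
    have hppow : ω ^ (p * p) = 1 := by
      have h0 : ω ^ (p * p) = ω ^ 0 := by
        apply GaussRep.pow_eq_pow_of_dvd ω hωd
        have : ((0:ℕ):ℤ) - ((p*p : ℕ):ℤ) = -((p:ℤ)^2) := by push_cast; ring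
        rw [this]
        exact dvd_neg.mpr hp2
      rw [h0, pow_zero]
    rw [hppow, one_smul]
  -- (a2) : v_i v_{i+1} = ω² v_{i+1} v_i
  have ha2 : ∀ i, 1 ≤ i → vGen p e i * vGen p e (i + 1)
      = (ω^2) • (vGen p e (i + 1) * vGen p e i) := by
    intro i hi
    obtain ⟨k, rfl⟩ : ∃ k, i = k + 1 := ⟨i - 1, by omega⟩
    have hL : vGen p e (k+1) * vGen p e (k+1+1) = (ω * ω) • (star (e k) * e (k+2)) := by
      rw [hv_def k, hv_def (k+1), smul_mul_smul_comm,
        mul_assoc (star (e k)) (e (k+1)) (star (e (k+1)) * e (k+1+1)), hcanc2]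
    have hR : vGen p e (k+1+1) * vGen p e (k+1)
        = ((ω * ω) * ((ω^2) * (c' * c'))) • (star (e k) * e (k+2)) := by
      rw [hv_def (k+1), hv_def k, smul_mul_smul_comm,
        mul_assoc (star (e (k+1))) (e (k+1+1)) (star (e k) * e (k+1)),
        GaussRep.swap_head (ω^2) (e (k+2)) (star (e k)) (e (k+1)) (R3 k (k+2) (by omega)),
        mul_smul_comm, smul_smul,
        R1r (k+1) (k+2) (by omega), mul_smul_comm, mul_smul_comm, smul_smul,
        GaussRep.swap_head c' (star (e (k+1))) (star (e k)) (e (k+1) * e (k+2))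
          (R2r k (k+1) (by omega)),
        smul_smul, hcanc1]
      congr 1
      ring
    rw [hL, hR, smul_smul]
    congr 1
    linear_combination (-(ω*ω*(ω^2)*c' + ω*ω)) * hkey
  -- (a3) far commutation for v (one-sided version)
  have ha3' : ∀ k l, k + 1 < l →
      vGen p e (k+1) * vGen p e (l+1) = vGen p e (l+1) * vGen p e (k+1) := by
    intro k l hkl
    have hL : vGen p e (k+1) * vGen p e (l+1)
        = ((ω * ω) * (c' * ((ω^2) * ((ω^2) * c'))))
            • (star (e l) * (e (l+1) * (star (e k) * e (k+1)))) := by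
      rw [hv_def k, hv_def l, smul_mul_smul_comm,
        mul_assoc (star (e k)) (e (k+1)) (star (e l) * e (l+1)),
        GaussRep.swap_head c' (e (k+1)) (star (e l)) (e (l+1)) (R4r (k+1) l (by omega)),
        mul_smul_comm, smul_smul,
        R1 (k+1) (l+1) (by omega), mul_smul_comm, mul_smul_comm, smul_smul,
        GaussRep.swap_head (ω^2) (star (e k)) (star (e l)) (e (l+1) * e (k+1))
          (R2 k l (by omega)),
        smul_smul,
        GaussRep.swap_head c' (star (e k)) (e (l+1)) (e (k+1)) (R3r k (l+1) (by omega)),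
        mul_smul_comm, smul_smul]
      congr 1
      ring
    have hR : vGen p e (l+1) * vGen p e (k+1)
        = (ω * ω) • (star (e l) * (e (l+1) * (star (e k) * e (k+1)))) := by
      rw [hv_def l, hv_def k, smul_mul_smul_comm,
        mul_assoc (star (e l)) (e (l+1)) (star (e k) * e (k+1))]
    rw [hL, hR]
    congr 1
    linear_combination (ω*ω*(ω^2)*c' + ω*ω) * hkey
  have ha3 : ∀ i j, 1 ≤ i → 1 ≤ j → (i + 1 < j ∨ j + 1 < i) →
      vGen p e i * vGen p e j = vGen p e j * vGen p e i := by
    intro i j hi hj hij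
    obtain ⟨k, rfl⟩ : ∃ k, i = k + 1 := ⟨i - 1, by omega⟩
    obtain ⟨l, rfl⟩ : ∃ l, j = l + 1 := ⟨j - 1, by omega⟩
    rcases hij with h | h
    · exact ha3' k l (by omega)
    · exact (ha3' l k (by omega)).symm
  -- star v * v = 1
  have hsv : ∀ i, 1 ≤ i → star (vGen p e i) * vGen p e i = 1 := by
    intro i hi
    obtain ⟨k, rfl⟩ : ∃ k, i = k + 1 := ⟨i - 1, by omega⟩
    rw [hv_def k, star_smul, star_mul, star_star, smul_mul_smul_comm,
      mul_assoc (star (e (k+1))) (e k) (star (e k) * e (k+1)), hcanc2]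
    rw [← starRingEnd_apply, hcω, h1, one_smul]
  -- u in terms of SS
  have huSS : ∀ i : ℕ, uGen p e i
      = ((Real.sqrt p : ℂ))⁻¹ • GaussRep.SS p ω (vGen p e i) := by
    intro i
    rw [uGen, GaussRep.SS]
    congr 1
    exact (GaussRep.sum_val p (fun k => ω ^ (k^2) • vGen p e i ^ k)).symm
  -- scalar fact
  have hp0 : (p:ℂ) ≠ 0 := Nat.cast_ne_zero.mpr (by omega)
  have hsp : ((Real.sqrt p : ℂ))⁻¹ * ((Real.sqrt p : ℂ))⁻¹ * (p:ℂ) = 1 := by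
    have hmul : (Real.sqrt p : ℂ) * (Real.sqrt p : ℂ) = (p:ℂ) := by
      rw [← Complex.ofReal_mul, Real.mul_self_sqrt (by positivity)]
      norm_num
    rw [← mul_inv, hmul, inv_mul_cancel₀ hp0]
  have hstar_s : star ((Real.sqrt p : ℂ))⁻¹ = ((Real.sqrt p : ℂ))⁻¹ := by
    rw [star_inv₀]
    congr 1
    exact Complex.conj_ofReal _
  -- (b) unitarity
  have hb : ∀ i, 1 ≤ i → star (uGen p e i) * uGen p e i = 1
      ∧ uGen p e i * star (uGen p e i) = 1 := by
    intro i hi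
    have hv := ha1 i hi
    have hs := hsv i hi
    constructor
    · rw [huSS i, star_smul, hstar_s, smul_mul_smul_comm,
        GaussRep.SS_star_mul p d ω hωd h2p hp2 hcω hprim _ hv hs, smul_smul, hsp, one_smul]
    · rw [huSS i, star_smul, hstar_s, smul_mul_smul_comm,
        GaussRep.SS_mul_star p d ω hωd h2p hp2 hcω hprim _ hv hs, smul_smul, hsp, one_smul]
  -- (c) braid
  have hc : ∀ i, 1 ≤ i → uGen p e i * uGen p e (i + 1) * uGen p e i
      = uGen p e (i + 1) * uGen p e i * uGen p e (i + 1) := by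
    intro i hi
    rw [huSS i, huSS (i+1)]
    simp only [smul_mul_smul_comm]
    congr 1
    exact GaussRep.SS_braid p d ω hωd h2p hp2 _ _ (ha1 i hi) (ha1 (i+1) (by omega)) (ha2 i hi)
  -- (c') far commutation for u
  have hcfar : ∀ i j, 1 ≤ i → 1 ≤ j → (i + 1 < j ∨ j + 1 < i) →
      uGen p e i * uGen p e j = uGen p e j * uGen p e i := by
    intro i j hi hj hij
    rw [huSS i, huSS j]
    rw [smul_mul_smul_comm, smul_mul_smul_comm]
    congr 1
    exact GaussRep.SS_commute p ω _ _ (ha3 i j hi hj hij)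
  -- (d) conjugation
  have hd' : ∀ i : ℕ, uGen p e (i + 1) * e i * star (uGen p e (i + 1)) = e (i + 1) := by
    intro i
    have hv := ha1 (i+1) (by omega)
    have hs := hsv (i+1) (by omega)
    have hfv : e i * vGen p e (i+1) = (ω^2) • (vGen p e (i+1) * e i) := by
      have hlhs : e i * vGen p e (i+1) = ω • e (i+1) := by
        rw [hv_def i, mul_smul_comm, hcanc2]
      have hrhs : vGen p e (i+1) * e i = (ω * c') • e (i+1) := by
        rw [hv_def i, smul_mul_assoc, mul_assoc (star (e i)) (e (i+1)) (e i),
          R1r i (i+1) (by omega), mul_smul_comm, hcanc1, smul_smul]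
      rw [hlhs, hrhs, smul_smul]
      congr 1
      linear_combination (-ω) * hkey
    have hvei : vGen p e (i+1) * e i = (ω * c') • e (i+1) := by
      rw [hv_def i, smul_mul_assoc, mul_assoc (star (e i)) (e (i+1)) (e i),
        R1r i (i+1) (by omega), mul_smul_comm, hcanc1, smul_smul]
    rw [huSS (i+1), star_smul, hstar_s, smul_mul_assoc, smul_mul_smul_comm,
      mul_assoc (GaussRep.SS p ω (vGen p e (i+1))) (e i) (star (GaussRep.SS p ω (vGen p e (i+1)))),
      GaussRep.SS_conj p d (by omega) ω hωd h2p hp2 hcω hprim _ _ hv hs hfv,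
      smul_smul, hvei, smul_smul]
    have hscal : ((Real.sqrt p : ℂ))⁻¹ * ((Real.sqrt p : ℂ))⁻¹ * ((p:ℂ) * ω) * (ω * c') = 1 := by
      linear_combination (ω^2*c') * hsp + hkey
    rw [hscal, one_smul]
  exact ⟨ha1, ha2, ha3, hb, hc, hcfar, hd'⟩
end
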